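/- arXiv:2103.09740 — 5 statements merged into one kernel-verified Lean document; each statement's English description precedes it below -/
import Mathlib

section
/- Let κ > 0 and let g be a finite Borel measure on ℝ³ with M := ∫_{ℝ³} |v|^{6+κ} dg(v) < ∞. For all R₀ > 0 and T > 0 there exists a constant C > 0 (depending only on R₀, T, κ, g(ℝ³) and M) such that for every integer j ≥ 1, every x ∈ ℝ³ with |x| ≤ R₀, and all τ₁, τ₂ ∈ [0,T]: ∫_{{y ∈ ℝ³ : 2^{j−1} < |y| ≤ 2^{j}}} ∫_{ℝ³} (1 + |x − y − v·τ₁|²)^{-1} (1 + |x − y − v·τ₂|²)^{-1} dg(v) dy ≤ C (2^{-j} + 2^{-κj/2}). -/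
open MeasureTheory

section Aux

local notation "E" => EuclideanSpace ℝ (Fin 3)

/-- Geometry: lower bound on `‖x - y - τ • v‖` for `y` in the annulus and `v` small. -/
lemma dyadic_norm_lower {x y v : E} {τ a R₀ T : ℝ} (hT : 0 < T)
    (hx : ‖x‖ ≤ R₀) (hR : 8 * R₀ ≤ a) (hy : a / 2 < ‖y‖)
    (hv : ‖v‖ ≤ a / (8 * T)) (hτ : τ ∈ Set.Icc (0 : ℝ) T) :
    a / 4 ≤ ‖x - y - τ • v‖ := by
  obtain ⟨hτ0, hτT⟩ := hτ
  have hsv : ‖τ • v‖ ≤ a / 8 := by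
    rw [norm_smul, Real.norm_eq_abs, abs_of_nonneg hτ0]
    calc τ * ‖v‖ ≤ T * (a / (8 * T)) :=
          mul_le_mul hτT hv (norm_nonneg _) hT.le
      _ = a / 8 := by field_simp
  have hkey : ‖y‖ ≤ ‖x‖ + ‖x - y - τ • v‖ + ‖τ • v‖ := by
    have h1 : ‖y‖ = ‖x - (x - y - τ • v) - τ • v‖ := by
      rw [show x - (x - y - τ • v) - τ • v = y from by abel]
    calc ‖y‖ = ‖x - (x - y - τ • v) - τ • v‖ := h1
      _ ≤ ‖x - (x - y - τ • v)‖ + ‖τ • v‖ := norm_sub_le _ _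
      _ ≤ ‖x‖ + ‖x - y - τ • v‖ + ‖τ • v‖ := by
          exact add_le_add_left (norm_sub_le _ _) _
  linarith

/-- Bound for a single factor. -/
lemma dyadic_factor_bound {z : E} {a : ℝ} (ha : 0 < a) (hz : a / 4 ≤ ‖z‖) :
    (1 + ‖z‖ ^ 2)⁻¹ ≤ 16 / a ^ 2 := by
  have h1 : a ^ 2 / 16 ≤ 1 + ‖z‖ ^ 2 := by
    have : (a / 4) ^ 2 ≤ ‖z‖ ^ 2 := by
      apply pow_le_pow_left₀ (by positivity) hz
    nlinarith
  have h2 : (0 : ℝ) < a ^ 2 / 16 := by positivity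
  calc (1 + ‖z‖ ^ 2)⁻¹ ≤ (a ^ 2 / 16)⁻¹ := by
        apply inv_anti₀ h2 h1
    _ = 16 / a ^ 2 := by rw [inv_div]

/-- The real arithmetic in the main case (large annulus). -/
lemma dyadic_real_caseA {κ T K' G' M'' R₀ a : ℝ} (hκ : 0 < κ) (hT : 0 < T)
    (hK' : 0 ≤ K') (hG' : 0 ≤ G') (hM'' : 0 ≤ M'') (hR₀ : 0 < R₀) (ha : 1 ≤ a) :
    (256 * G' / a ^ 4 + M'' / ((a / (8 * T)) ^ (6 + κ))) * (a ^ 3 * K')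
      ≤ (1 + K' * (256 * G' + (8 * T) ^ (6 + κ) * M'')
          + K' * (8 * R₀) ^ 3 * (8 * R₀) ^ (κ / 2) * G') * (a⁻¹ + a ^ (-(κ / 2))) := by
  have ha0 : (0 : ℝ) < a := lt_of_lt_of_le one_pos ha
  have ha0' : a ≠ 0 := ha0.ne'
  have h8T : (0 : ℝ) < 8 * T := by linarith
  set C : ℝ := 1 + K' * (256 * G' + (8 * T) ^ (6 + κ) * M'')
      + K' * (8 * R₀) ^ 3 * (8 * R₀) ^ (κ / 2) * G' with hC
  have hpow1 : (0 : ℝ) ≤ (8 * T) ^ (6 + κ) := Real.rpow_nonneg h8T.le _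
  have hpow2 : (0 : ℝ) ≤ (8 * R₀) ^ (κ / 2) := Real.rpow_nonneg (by linarith) _
  have hexp0 : K' * (256 * G' + (8 * T) ^ (6 + κ) * M'')
      = 256 * G' * K' + K' * ((8 * T) ^ (6 + κ) * M'') := by ring
  have h01 : 0 ≤ K' * ((8 * T) ^ (6 + κ) * M'') := by positivity
  have h02 : 0 ≤ K' * (8 * R₀) ^ 3 * (8 * R₀) ^ (κ / 2) * G' := by positivity
  have h03 : 0 ≤ 256 * G' * K' := by positivity
  have hC1 : 256 * G' * K' ≤ C := by
    rw [hC, hexp0]; linarith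
  have hC2 : M'' * (8 * T) ^ (6 + κ) * K' ≤ C := by
    have : K' * ((8 * T) ^ (6 + κ) * M'') = M'' * (8 * T) ^ (6 + κ) * K' := by ring
    rw [hC, hexp0, this]; linarith
  have hrpos : (0 : ℝ) < a / (8 * T) := by positivity
  -- rewrite the rpow of the quotient
  have hdiv : (a / (8 * T)) ^ (6 + κ) = a ^ (6 + κ) / (8 * T) ^ (6 + κ) :=
    Real.div_rpow ha0.le h8T.le _
  have h6 : a ^ (6 + κ) = a ^ (3 : ℕ) * a ^ ((3 : ℝ) + κ) := by
    rw [← Real.rpow_natCast a 3, ← Real.rpow_add ha0]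
    norm_num
    congr 1
    ring
  have h8Tpos : (0 : ℝ) < (8 * T) ^ (6 + κ) := Real.rpow_pos_of_pos h8T _
  have hanpos : (0 : ℝ) < a ^ ((3 : ℝ) + κ) := Real.rpow_pos_of_pos ha0 _
  -- term 1
  have ht1 : (256 * G' / a ^ 4) * (a ^ 3 * K') = 256 * G' * K' * a⁻¹ := by
    field_simp
  -- term 2
  have ht2 : (M'' / ((a / (8 * T)) ^ (6 + κ))) * (a ^ 3 * K')
      = M'' * (8 * T) ^ (6 + κ) * K' * (a ^ ((3 : ℝ) + κ))⁻¹ := by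
    rw [hdiv, h6]
    field_simp
  have hexp : (a ^ ((3 : ℝ) + κ))⁻¹ ≤ a ^ (-(κ / 2)) := by
    rw [← Real.rpow_neg ha0.le]
    exact Real.rpow_le_rpow_of_exponent_le ha (by linarith)
  have hinv : (0 : ℝ) ≤ a⁻¹ := by positivity
  have hs : (0 : ℝ) ≤ a ^ (-(κ / 2)) := Real.rpow_nonneg ha0.le _
  calc (256 * G' / a ^ 4 + M'' / ((a / (8 * T)) ^ (6 + κ))) * (a ^ 3 * K')
      = 256 * G' * K' * a⁻¹ + M'' * (8 * T) ^ (6 + κ) * K' * (a ^ ((3 : ℝ) + κ))⁻¹ := by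
        rw [add_mul, ht1, ht2]
    _ ≤ C * a⁻¹ + C * a ^ (-(κ / 2)) := by
        apply add_le_add
        · exact mul_le_mul_of_nonneg_right hC1 hinv
        · calc M'' * (8 * T) ^ (6 + κ) * K' * (a ^ ((3 : ℝ) + κ))⁻¹
              ≤ M'' * (8 * T) ^ (6 + κ) * K' * a ^ (-(κ / 2)) := by
                apply mul_le_mul_of_nonneg_left hexp (by positivity)
            _ ≤ C * a ^ (-(κ / 2)) := mul_le_mul_of_nonneg_right hC2 hs
    _ = C * (a⁻¹ + a ^ (-(κ / 2))) := by ring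

/-- The real arithmetic in the small annulus case. -/
lemma dyadic_real_caseB {κ T K' G' M'' R₀ a : ℝ} (hκ : 0 < κ) (hT : 0 < T)
    (hK' : 0 ≤ K') (hG' : 0 ≤ G') (hM'' : 0 ≤ M'') (hR₀ : 0 < R₀) (ha : 1 ≤ a)
    (hsmall : a ≤ 8 * R₀) :
    G' * (a ^ 3 * K')
      ≤ (1 + K' * (256 * G' + (8 * T) ^ (6 + κ) * M'')
          + K' * (8 * R₀) ^ 3 * (8 * R₀) ^ (κ / 2) * G') * (a⁻¹ + a ^ (-(κ / 2))) := by
  have ha0 : (0 : ℝ) < a := lt_of_lt_of_le one_pos ha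
  have h8R : (0 : ℝ) < 8 * R₀ := by linarith
  have hcube : a ^ 3 ≤ (8 * R₀) ^ 3 := pow_le_pow_left₀ ha0.le hsmall 3
  have hbase : a ^ (κ / 2) ≤ (8 * R₀) ^ (κ / 2) :=
    Real.rpow_le_rpow ha0.le hsmall (by positivity)
  have hapos : (0 : ℝ) < a ^ (κ / 2) := Real.rpow_pos_of_pos ha0 _
  have h1 : (1 : ℝ) ≤ (8 * R₀) ^ (κ / 2) * a ^ (-(κ / 2)) := by
    rw [Real.rpow_neg ha0.le]
    calc (1 : ℝ) = a ^ (κ / 2) * (a ^ (κ / 2))⁻¹ := by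
          rw [mul_inv_cancel₀ hapos.ne']
      _ ≤ (8 * R₀) ^ (κ / 2) * (a ^ (κ / 2))⁻¹ := by
          apply mul_le_mul_of_nonneg_right hbase (by positivity)
  have hs : (0 : ℝ) ≤ a ^ (-(κ / 2)) := Real.rpow_nonneg ha0.le _
  have hinv : (0 : ℝ) ≤ a⁻¹ := by positivity
  have hpow1 : (0 : ℝ) ≤ (8 * T) ^ (6 + κ) := Real.rpow_nonneg (by linarith) _
  have hpow2 : (0 : ℝ) ≤ (8 * R₀) ^ (κ / 2) := Real.rpow_nonneg h8R.le _
  have key : G' * (a ^ 3 * K') ≤ K' * (8 * R₀) ^ 3 * (8 * R₀) ^ (κ / 2) * G' * a ^ (-(κ / 2)) := by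
    calc G' * (a ^ 3 * K') = (G' * K') * a ^ 3 * 1 := by ring
      _ ≤ (G' * K') * (8 * R₀) ^ 3 * ((8 * R₀) ^ (κ / 2) * a ^ (-(κ / 2))) := by
          apply mul_le_mul
          · exact mul_le_mul_of_nonneg_left hcube (by positivity)
          · exact h1
          · norm_num
          · positivity
      _ = K' * (8 * R₀) ^ 3 * (8 * R₀) ^ (κ / 2) * G' * a ^ (-(κ / 2)) := by ring
  have hCge : K' * (8 * R₀) ^ 3 * (8 * R₀) ^ (κ / 2) * G'
      ≤ 1 + K' * (256 * G' + (8 * T) ^ (6 + κ) * M'')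
        + K' * (8 * R₀) ^ 3 * (8 * R₀) ^ (κ / 2) * G' := by
    have h0 : 0 ≤ K' * (256 * G' + (8 * T) ^ (6 + κ) * M'') := by positivity
    linarith
  calc G' * (a ^ 3 * K')
      ≤ K' * (8 * R₀) ^ 3 * (8 * R₀) ^ (κ / 2) * G' * a ^ (-(κ / 2)) := key
    _ ≤ (1 + K' * (256 * G' + (8 * T) ^ (6 + κ) * M'')
          + K' * (8 * R₀) ^ 3 * (8 * R₀) ^ (κ / 2) * G') * a ^ (-(κ / 2)) :=
        mul_le_mul_of_nonneg_right hCge hs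
    _ ≤ _ := by
        apply mul_le_mul_of_nonneg_left _ (by positivity)
        linarith

end Aux

/-- Dyadic annulus estimate: for a finite Borel velocity measure `g` on `ℝ³` with
finite moment of order `6 + κ`, the contribution of the annulus `2^{j-1} < |y| ≤ 2^j`
to the second moment of the force field decays geometrically in `j`. -/
theorem dyadic_annulus_estimate (κ : ℝ) (hκ : 0 < κ)
    (g : Measure (EuclideanSpace ℝ (Fin 3))) [IsFiniteMeasure g]
    (hM : ∫⁻ v, ENNReal.ofReal (‖v‖ ^ (6 + κ)) ∂g < ⊤) :
    ∀ R₀ > (0 : ℝ), ∀ T > (0 : ℝ), ∃ C > (0 : ℝ),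
      ∀ j : ℕ, 1 ≤ j → ∀ x : EuclideanSpace ℝ (Fin 3), ‖x‖ ≤ R₀ →
      ∀ τ₁ ∈ Set.Icc (0 : ℝ) T, ∀ τ₂ ∈ Set.Icc (0 : ℝ) T,
      (∫⁻ y in {y : EuclideanSpace ℝ (Fin 3) | (2 : ℝ) ^ (j - 1) < ‖y‖ ∧ ‖y‖ ≤ (2 : ℝ) ^ j},
          ∫⁻ v, ENNReal.ofReal
            ((1 + ‖x - y - τ₁ • v‖ ^ 2)⁻¹ * (1 + ‖x - y - τ₂ • v‖ ^ 2)⁻¹) ∂g)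
        ≤ ENNReal.ofReal (C * (((2 : ℝ) ^ j)⁻¹ + (2 : ℝ) ^ (-(κ * (j : ℝ)) / 2))) := by
  intro R₀ hR₀ T hT
  set E := EuclideanSpace ℝ (Fin 3)
  set K' : ℝ := (volume (Metric.closedBall (0 : E) 1)).toReal with hK'def
  set G' : ℝ := (g Set.univ).toReal with hG'def
  set M'' : ℝ := (∫⁻ v, ENNReal.ofReal (‖v‖ ^ (6 + κ)) ∂g).toReal with hM''def
  have hK' : 0 ≤ K' := ENNReal.toReal_nonneg
  have hG' : 0 ≤ G' := ENNReal.toReal_nonneg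
  have hM'' : 0 ≤ M'' := ENNReal.toReal_nonneg
  have hKball : volume (Metric.closedBall (0 : E) 1) = ENNReal.ofReal K' :=
    (ENNReal.ofReal_toReal (measure_closedBall_lt_top).ne).symm
  have hGuniv : g Set.univ = ENNReal.ofReal G' :=
    (ENNReal.ofReal_toReal (measure_ne_top g _)).symm
  have hMeq : (∫⁻ v, ENNReal.ofReal (‖v‖ ^ (6 + κ)) ∂g) = ENNReal.ofReal M'' :=
    (ENNReal.ofReal_toReal hM.ne).symm
  refine ⟨1 + K' * (256 * G' + (8 * T) ^ (6 + κ) * M'')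
      + K' * (8 * R₀) ^ 3 * (8 * R₀) ^ (κ / 2) * G', by positivity, ?_⟩
  set C : ℝ := 1 + K' * (256 * G' + (8 * T) ^ (6 + κ) * M'')
      + K' * (8 * R₀) ^ 3 * (8 * R₀) ^ (κ / 2) * G' with hCdef
  intro j hj x hx τ₁ hτ₁ τ₂ hτ₂
  set a : ℝ := (2 : ℝ) ^ j with ha_def
  have ha1 : (1 : ℝ) ≤ a := one_le_pow₀ (by norm_num)
  have ha0 : (0 : ℝ) < a := lt_of_lt_of_le one_pos ha1
  -- relate the rpow in the RHS to a
  have hs_eq : (2 : ℝ) ^ (-(κ * (j : ℝ)) / 2) = a ^ (-(κ / 2)) := by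
    rw [ha_def, ← Real.rpow_natCast (2 : ℝ) j, ← Real.rpow_mul (by norm_num : (0:ℝ) ≤ 2)]
    congr 1
    ring
  -- lower bound of annulus
  have hhalf : (2 : ℝ) ^ (j - 1) = a / 2 := by
    rw [ha_def, eq_div_iff (by norm_num : (2:ℝ) ≠ 0), ← pow_succ]
    congr 1
    omega
  set A : Set E := {y : E | (2 : ℝ) ^ (j - 1) < ‖y‖ ∧ ‖y‖ ≤ (2 : ℝ) ^ j} with hAdef
  have hAmeas : MeasurableSet A :=
    (measurableSet_lt measurable_const measurable_norm).inter
      (measurableSet_le measurable_norm measurable_const)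
  -- measure of annulus
  have hAvol : volume A ≤ ENNReal.ofReal (a ^ 3 * K') := by
    have hsub : A ⊆ Metric.closedBall (0 : E) a := by
      intro y hy
      rw [Metric.mem_closedBall, dist_zero_right]
      exact hy.2
    calc volume A ≤ volume (Metric.closedBall (0 : E) a) := measure_mono hsub
      _ = ENNReal.ofReal (a ^ Module.finrank ℝ E) * volume (Metric.closedBall (0 : E) 1) :=
          Measure.addHaar_closedBall' volume _ ha0.le
      _ = ENNReal.ofReal (a ^ 3 * K') := by
          rw [hKball, ← ENNReal.ofReal_mul (by positivity)]
          have : Module.finrank ℝ E = 3 := finrank_euclideanSpace_fin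
          rw [this]
  -- F ≤ 1 always
  set F : E → E → ENNReal := fun y v => ENNReal.ofReal
      ((1 + ‖x - y - τ₁ • v‖ ^ 2)⁻¹ * (1 + ‖x - y - τ₂ • v‖ ^ 2)⁻¹) with hFdef
  have hF_le_one : ∀ y v, F y v ≤ 1 := by
    intro y v
    apply ENNReal.ofReal_le_one.2
    have h1 : (1 + ‖x - y - τ₁ • v‖ ^ 2)⁻¹ ≤ 1 := by
      apply inv_le_one_of_one_le₀
      nlinarith [sq_nonneg ‖x - y - τ₁ • v‖]
    have h2 : (1 + ‖x - y - τ₂ • v‖ ^ 2)⁻¹ ≤ 1 := by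
      apply inv_le_one_of_one_le₀
      nlinarith [sq_nonneg ‖x - y - τ₂ • v‖]
    have h1' : (0:ℝ) ≤ (1 + ‖x - y - τ₁ • v‖ ^ 2)⁻¹ := by positivity
    nlinarith
  by_cases hR : 8 * R₀ ≤ a
  · -- main case: the annulus is far away
    set r : ℝ := a / (8 * T) with hrdef
    have hr0 : 0 < r := by positivity
    set S : Set E := Metric.closedBall (0 : E) r with hSdef
    have hSmeas : MeasurableSet S := measurableSet_closedBall
    set D : ℝ := 256 * G' / a ^ 4 + M'' / (r ^ (6 + κ)) with hDdef
    have hD0 : 0 ≤ D := by positivity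
    -- inner integral bound for y ∈ A
    have hinner : ∀ y ∈ A, (∫⁻ v, F y v ∂g) ≤ ENNReal.ofReal D := by
      intro y hy
      have hy1 : a / 2 < ‖y‖ := by rw [← hhalf]; exact hy.1
      have hsplit : (∫⁻ v, F y v ∂g)
          = (∫⁻ v in S, F y v ∂g) + ∫⁻ v in Sᶜ, F y v ∂g :=
        (lintegral_add_compl _ hSmeas).symm
      have hbound1 : (∫⁻ v in S, F y v ∂g) ≤ ENNReal.ofReal (256 * G' / a ^ 4) := by
        have hptwise : ∀ v ∈ S, F y v ≤ ENNReal.ofReal (256 / a ^ 4) := by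
          intro v hv
          rw [Metric.mem_closedBall, dist_zero_right] at hv
          have hn1 : a / 4 ≤ ‖x - y - τ₁ • v‖ :=
            dyadic_norm_lower hT hx hR hy1 hv hτ₁
          have hn2 : a / 4 ≤ ‖x - y - τ₂ • v‖ :=
            dyadic_norm_lower hT hx hR hy1 hv hτ₂
          have hf1 := dyadic_factor_bound ha0 hn1
          have hf2 := dyadic_factor_bound ha0 hn2
          apply ENNReal.ofReal_le_ofReal
          have hnn1 : (0:ℝ) ≤ (1 + ‖x - y - τ₁ • v‖ ^ 2)⁻¹ := by positivity
          have hnn2 : (0:ℝ) ≤ (1 + ‖x - y - τ₂ • v‖ ^ 2)⁻¹ := by positivity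
          calc (1 + ‖x - y - τ₁ • v‖ ^ 2)⁻¹ * (1 + ‖x - y - τ₂ • v‖ ^ 2)⁻¹
              ≤ (16 / a ^ 2) * (16 / a ^ 2) :=
                mul_le_mul hf1 hf2 hnn2 (by positivity)
            _ = 256 / a ^ 4 := by field_simp; ring
        calc (∫⁻ v in S, F y v ∂g) ≤ ∫⁻ _ in S, ENNReal.ofReal (256 / a ^ 4) ∂g :=
              setLIntegral_mono' hSmeas hptwise
          _ = ENNReal.ofReal (256 / a ^ 4) * g S := setLIntegral_const _ _
          _ ≤ ENNReal.ofReal (256 / a ^ 4) * g Set.univ :=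
              mul_le_mul_right (measure_mono (Set.subset_univ _)) _
          _ = ENNReal.ofReal (256 * G' / a ^ 4) := by
              rw [hGuniv, ← ENNReal.ofReal_mul (by positivity)]
              congr 1
              ring
      have hbound2 : (∫⁻ v in Sᶜ, F y v ∂g) ≤ ENNReal.ofReal (M'' / r ^ (6 + κ)) := by
        have h1 : (∫⁻ v in Sᶜ, F y v ∂g) ≤ ∫⁻ _ in Sᶜ, (1 : ENNReal) ∂g :=
          setLIntegral_mono' hSmeas.compl (fun v _ => hF_le_one y v)
        have h2 : (∫⁻ _ in Sᶜ, (1 : ENNReal) ∂g) = g Sᶜ := setLIntegral_one _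
        have hmarkov : g Sᶜ ≤ ENNReal.ofReal (M'' / r ^ (6 + κ)) := by
          have hsub : Sᶜ ⊆ {v : E | ENNReal.ofReal (r ^ (6 + κ))
              ≤ ENNReal.ofReal (‖v‖ ^ (6 + κ))} := by
            intro v hv
            simp only [hSdef, Set.mem_compl_iff, Metric.mem_closedBall,
              dist_zero_right, not_le] at hv
            exact ENNReal.ofReal_le_ofReal
              (Real.rpow_le_rpow hr0.le hv.le (by linarith))
          have hmeas : AEMeasurable (fun v : E => ENNReal.ofReal (‖v‖ ^ (6 + κ))) g :=
            (ENNReal.measurable_ofReal.comp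
              (measurable_norm.pow_const _ : Measurable fun v : E => ‖v‖ ^ (6 + κ))).aemeasurable
          have hε0 : ENNReal.ofReal (r ^ (6 + κ)) ≠ 0 := by
            simp only [ne_eq, ENNReal.ofReal_eq_zero, not_le]
            exact Real.rpow_pos_of_pos hr0 _
          calc g Sᶜ ≤ g {v : E | ENNReal.ofReal (r ^ (6 + κ))
                ≤ ENNReal.ofReal (‖v‖ ^ (6 + κ))} := measure_mono hsub
            _ ≤ (∫⁻ v, ENNReal.ofReal (‖v‖ ^ (6 + κ)) ∂g) / ENNReal.ofReal (r ^ (6 + κ)) :=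
                meas_ge_le_lintegral_div hmeas hε0 ENNReal.ofReal_ne_top
            _ = ENNReal.ofReal M'' / ENNReal.ofReal (r ^ (6 + κ)) := by rw [hMeq]
            _ = ENNReal.ofReal (M'' / r ^ (6 + κ)) :=
                (ENNReal.ofReal_div_of_pos (Real.rpow_pos_of_pos hr0 _)).symm
        exact h1.trans (h2.le.trans hmarkov)
      calc (∫⁻ v, F y v ∂g)
          = (∫⁻ v in S, F y v ∂g) + ∫⁻ v in Sᶜ, F y v ∂g := hsplit
        _ ≤ ENNReal.ofReal (256 * G' / a ^ 4) + ENNReal.ofReal (M'' / r ^ (6 + κ)) :=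
            add_le_add hbound1 hbound2
        _ = ENNReal.ofReal D := by
            rw [← ENNReal.ofReal_add (by positivity) (by positivity)]
    -- outer integral
    calc (∫⁻ y in A, ∫⁻ v, F y v ∂g)
        ≤ ∫⁻ _ in A, ENNReal.ofReal D := setLIntegral_mono' hAmeas hinner
      _ = ENNReal.ofReal D * volume A := setLIntegral_const _ _
      _ ≤ ENNReal.ofReal D * ENNReal.ofReal (a ^ 3 * K') := mul_le_mul_right hAvol _
      _ = ENNReal.ofReal (D * (a ^ 3 * K')) := (ENNReal.ofReal_mul hD0).symm
      _ ≤ ENNReal.ofReal (C * (a⁻¹ + a ^ (-(κ / 2)))) := by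
          apply ENNReal.ofReal_le_ofReal
          exact dyadic_real_caseA hκ hT hK' hG' hM'' hR₀ ha1
      _ = ENNReal.ofReal (C * (((2 : ℝ) ^ j)⁻¹ + (2 : ℝ) ^ (-(κ * (j : ℝ)) / 2))) := by
          rw [hs_eq]
  · -- small annulus case
    push_neg at hR
    have hinner : ∀ y ∈ A, (∫⁻ v, F y v ∂g) ≤ ENNReal.ofReal G' := by
      intro y _
      calc (∫⁻ v, F y v ∂g) ≤ ∫⁻ _, (1 : ENNReal) ∂g := lintegral_mono (hF_le_one y)
        _ = g Set.univ := lintegral_one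
        _ = ENNReal.ofReal G' := hGuniv
    calc (∫⁻ y in A, ∫⁻ v, F y v ∂g)
        ≤ ∫⁻ _ in A, ENNReal.ofReal G' := setLIntegral_mono' hAmeas hinner
      _ = ENNReal.ofReal G' * volume A := setLIntegral_const _ _
      _ ≤ ENNReal.ofReal G' * ENNReal.ofReal (a ^ 3 * K') := mul_le_mul_right hAvol _
      _ = ENNReal.ofReal (G' * (a ^ 3 * K')) := (ENNReal.ofReal_mul hG').symm
      _ ≤ ENNReal.ofReal (C * (a⁻¹ + a ^ (-(κ / 2)))) := by
          apply ENNReal.ofReal_le_ofReal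
          exact dyadic_real_caseB hκ hT hK' hG' hM'' hR₀ ha1 hR.le
      _ = ENNReal.ofReal (C * (((2 : ℝ) ^ j)⁻¹ + (2 : ℝ) ^ (-(κ * (j : ℝ)) / 2))) := by
          rw [hs_eq]
end

section
/- Let Φ : ℝ³ → ℝ be continuously differentiable and suppose there exist constants C > 0 and a > 2 such that |∇Φ(x)| ≤ C (1 + |x|)^{-(1+a)} for all x ∈ ℝ³. Let g ∈ C¹(ℝ³, ℝ) be compactly supported and let V ∈ ℝ³. Then the vector-valued integral Λ := ∫_{ℝ³} ∫_{ℝ³} ∇Φ(η) ⟨∇g(w), ∫_{-∞}^{0} ∇Φ(η + u·(w − V)) du⟩ dw dη is absolutely convergent, and the functions H(t) := ∫_{ℝ³} ∫_{ℝ³} ∇Φ(η) ⟨∇g(w), ∫_{-t}^{0} ∇Φ(η + u·(w − V)) du⟩ dw dη converge to Λ as t → ∞. -/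
open MeasureTheory RealInnerProductSpace Filter

noncomputable section

namespace FrictionAux

abbrev E3 := EuclideanSpace ℝ (Fin 3)

lemma coord_abs_le_norm (x : E3) (i : Fin 3) : |x i| ≤ ‖x‖ := by
  rw [EuclideanSpace.norm_eq]
  have h1 : |x i| = Real.sqrt ((x i) ^ 2) := (Real.sqrt_sq_eq_abs _).symm
  rw [h1]
  apply Real.sqrt_le_sqrt
  have h2 : (x i) ^ 2 = ‖x i‖ ^ 2 := by rw [Real.norm_eq_abs, sq_abs]
  rw [h2]
  exact Finset.single_le_sum (f := fun j => ‖x j‖ ^ 2) (fun j _ => sq_nonneg _) (Finset.mem_univ i)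

lemma integrableOn_inv_norm {R : ℝ} (hR : 0 < R) :
    IntegrableOn (fun x : E3 => ‖x‖⁻¹) (Metric.ball 0 R) volume := by
  set q : ℝ := -(1/3 : ℝ) with hq
  set ψ : ℝ → ℝ := (Set.Ioc (-R) R).indicator (fun s => |s| ^ q) with hψdef
  have habs : Measurable fun s : ℝ => |s| ^ q := by fun_prop
  have hIoc : IntegrableOn (fun s : ℝ => |s| ^ q) (Set.Ioc 0 R) := by
    have h0 : IntervalIntegrable (fun s : ℝ => s ^ q) volume 0 R :=
      intervalIntegral.intervalIntegrable_rpow' (by norm_num [hq])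
    have := (intervalIntegrable_iff_integrableOn_Ioc_of_le hR.le).mp h0
    refine this.congr_fun (fun s hs => ?_) measurableSet_Ioc
    rw [abs_of_pos hs.1]
  have hIocNeg : IntegrableOn (fun s : ℝ => |s| ^ q) (Set.Ioc (-R) 0) := by
    have hIco : IntegrableOn (fun s : ℝ => |s| ^ q) (Set.Ico 0 R) :=
      hIoc.congr_set_ae MeasureTheory.Ico_ae_eq_Ioc
    have hmp : MeasurePreserving (fun s : ℝ => -s) volume volume :=
      Measure.measurePreserving_neg volume
    have hemb : MeasurableEmbedding (fun s : ℝ => -s) :=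
      (Homeomorph.neg ℝ).measurableEmbedding
    have hpre : (fun s : ℝ => -s) ⁻¹' (Set.Ico 0 R) = Set.Ioc (-R) 0 := by
      ext s
      simp only [Set.mem_preimage, Set.mem_Ico, Set.mem_Ioc]
      constructor
      · rintro ⟨h1, h2⟩; constructor <;> linarith
      · rintro ⟨h1, h2⟩; constructor <;> linarith
    have := (hmp.integrableOn_comp_preimage hemb (s := Set.Ico 0 R)
      (f := fun s : ℝ => |s| ^ q)).mpr hIco
    rw [hpre] at this
    refine this.congr_fun (fun s _ => ?_) measurableSet_Ioc
    simp [Function.comp, abs_neg]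
  have hψint : Integrable ψ volume := by
    have hunion : IntegrableOn (fun s : ℝ => |s| ^ q) (Set.Ioc (-R) R) := by
      have : Set.Ioc (-R) R = Set.Ioc (-R) 0 ∪ Set.Ioc 0 R := by
        rw [Set.Ioc_union_Ioc_eq_Ioc (by linarith) (by linarith)]
      rw [this]
      exact hIocNeg.union hIoc
    simpa [hψdef] using hunion.integrable_indicator measurableSet_Ioc
  -- product majorant on pi space
  have hprod : Integrable (fun y : Fin 3 → ℝ => ∏ i, ψ (y i)) volume :=
    Integrable.fintype_prod (f := fun _ : Fin 3 => ψ) (fun _ => hψint)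
  have hmaj : Integrable (fun x : E3 => ∏ i, ψ (x i)) volume := by
    have hmp := EuclideanSpace.volume_preserving_symm_measurableEquiv_toLp (Fin 3)
    have := (hmp.integrable_comp_emb (MeasurableEquiv.toLp 2 (Fin 3 → ℝ)).symm.measurableEmbedding).mpr hprod
    exact this
  -- a.e. every coordinate is nonzero
  have hae : ∀ᵐ x : E3 ∂volume, ∀ i : Fin 3, x i ≠ 0 := by
    rw [MeasureTheory.ae_all_iff]
    intro i
    have : {x : E3 | ¬ x i ≠ 0} ⊆ (LinearMap.ker (EuclideanSpace.proj (𝕜 := ℝ) i : E3 →ₗ[ℝ] ℝ) : Submodule ℝ E3) := by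
      intro x hx
      simp only [Set.mem_setOf_eq, not_not] at hx
      simpa [LinearMap.mem_ker] using hx
    refine measure_mono_null this ?_
    apply Measure.addHaar_submodule
    intro htop
    have h1 : (EuclideanSpace.single i (1:ℝ) : E3) ∈ (LinearMap.ker (EuclideanSpace.proj (𝕜 := ℝ) i : E3 →ₗ[ℝ] ℝ) : Submodule ℝ E3) := by
      rw [htop]; trivial
    simp [LinearMap.mem_ker] at h1
  refine (hmaj.restrict (s := Metric.ball 0 R)).mono' ?_ ?_
  · exact (measurable_norm.inv).aestronglyMeasurable
  · filter_upwards [ae_restrict_mem measurableSet_ball, ae_restrict_of_ae hae] with x hxball hx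
    have hxi : ∀ i : Fin 3, ψ (x i) = |x i| ^ q := by
      intro i
      have h1 : |x i| ≤ ‖x‖ := coord_abs_le_norm x i
      have h2 : ‖x‖ < R := by simpa [Metric.mem_ball] using hxball
      have h3 := abs_lt.mp (lt_of_le_of_lt h1 h2)
      have : x i ∈ Set.Ioc (-R) R := ⟨h3.1, h3.2.le⟩
      simp [hψdef, Set.indicator_of_mem this]
    have hxpos : ∀ i : Fin 3, 0 < |x i| := fun i => abs_pos.mpr (hx i)
    have hxnorm : 0 < ‖x‖ := norm_pos_iff.mpr (fun h0 => hx 0 (by rw [h0]; rfl))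
    rw [Real.norm_eq_abs, abs_of_nonneg (inv_nonneg.mpr (norm_nonneg x))]
    calc ‖x‖⁻¹ ≤ (∏ i, |x i| ^ ((1:ℝ)/3))⁻¹ := by
          apply inv_anti₀
          · exact Finset.prod_pos (fun i _ => Real.rpow_pos_of_pos (hxpos i) _)
          · calc ∏ i, |x i| ^ ((1:ℝ)/3) ≤ ∏ i : Fin 3, ‖x‖ ^ ((1:ℝ)/3) := by
                  apply Finset.prod_le_prod
                  · intro i _; positivity
                  · intro i _
                    exact Real.rpow_le_rpow (abs_nonneg _) (coord_abs_le_norm x i) (by norm_num)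
              _ = (‖x‖ ^ ((1:ℝ)/3)) ^ (3:ℕ) := by
                  rw [Finset.prod_const]; norm_num
              _ = ‖x‖ := by
                  rw [← Real.rpow_natCast (‖x‖ ^ ((1:ℝ)/3)) 3, ← Real.rpow_mul (norm_nonneg x)]
                  norm_num
      _ = ∏ i, ψ (x i) := by
          rw [← Finset.prod_inv_distrib]
          apply Finset.prod_congr rfl
          intro i _
          rw [hxi i, hq, Real.rpow_neg (abs_nonneg _)]

lemma weight_integrable {G : E3 → E3} (hGc : Continuous G) (hGsupp : HasCompactSupport G)
    (V : E3) : Integrable (fun w : E3 => ‖G w‖ / ‖w - V‖) volume := by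
  obtain ⟨r, hr⟩ := (hGsupp.isBounded).subset_closedBall V
  set R : ℝ := |r| + 1 with hR
  have hRpos : 0 < R := by positivity
  have hsupp : tsupport G ⊆ Metric.ball V R := by
    refine hr.trans ?_
    intro y hy
    simp only [Metric.mem_closedBall] at hy
    simp only [Metric.mem_ball]
    calc dist y V ≤ r := hy
      _ ≤ |r| := le_abs_self r
      _ < R := by rw [hR]; linarith
  obtain ⟨B, hB⟩ := (hGc.norm).bounded_above_of_compact_support hGsupp.norm
  have hriesz : IntegrableOn (fun w : E3 => ‖w - V‖⁻¹) (Metric.ball V R) volume := by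
    have h0 := integrableOn_inv_norm hRpos
    have h1 : Integrable ((Metric.ball (0:E3) R).indicator (fun x : E3 => ‖x‖⁻¹)) volume :=
      h0.integrable_indicator Metric.isOpen_ball.measurableSet
    have h2 : Integrable (fun w : E3 =>
        (Metric.ball (0:E3) R).indicator (fun x : E3 => ‖x‖⁻¹) (w - V)) volume :=
      h1.comp_sub_right V
    have h3 : (fun w : E3 => (Metric.ball (0:E3) R).indicator (fun x : E3 => ‖x‖⁻¹) (w - V))
        = (Metric.ball V R).indicator (fun w : E3 => ‖w - V‖⁻¹) := by
      ext w
      by_cases hw : w ∈ Metric.ball V R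
      · have hw' : w - V ∈ Metric.ball (0:E3) R := by
          simpa [Metric.mem_ball, dist_eq_norm] using hw
        rw [Set.indicator_of_mem hw', Set.indicator_of_mem hw]
      · have hw' : w - V ∉ Metric.ball (0:E3) R := by
          simp only [Metric.mem_ball, dist_eq_norm] at hw ⊢
          simpa [dist_eq_norm] using hw
        rw [Set.indicator_of_notMem hw', Set.indicator_of_notMem hw]
    rw [h3] at h2
    exact (integrable_indicator_iff Metric.isOpen_ball.measurableSet).mp h2
  have hmaj : Integrable (fun w : E3 =>
      B * (Metric.ball V R).indicator (fun w : E3 => ‖w - V‖⁻¹) w) volume :=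
    (hriesz.integrable_indicator Metric.isOpen_ball.measurableSet).const_mul B
  refine hmaj.mono' ?_ ?_
  · exact ((hGc.norm.measurable).div (measurable_norm.comp (measurable_id.sub_const V))).aestronglyMeasurable
  · refine Eventually.of_forall (fun w => ?_)
    rw [Real.norm_eq_abs, abs_of_nonneg (div_nonneg (norm_nonneg _) (norm_nonneg _))]
    by_cases hw : w ∈ Metric.ball V R
    · rw [Set.indicator_of_mem hw, div_eq_mul_inv]
      exact mul_le_mul_of_nonneg_right ((le_abs_self _).trans (by simpa using hB w))
        (inv_nonneg.mpr (norm_nonneg _))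
    · have hGw : G w = 0 := image_eq_zero_of_notMem_tsupport (fun hmem => hw (hsupp hmem))
      have hBnn : 0 ≤ B := le_trans (norm_nonneg _) (hB V)
      have : 0 ≤ (Metric.ball V R).indicator (fun w : E3 => ‖w - V‖⁻¹) w :=
        Set.indicator_nonneg (fun y _ => inv_nonneg.mpr (norm_nonneg _)) w
      simp only [hGw, norm_zero, zero_div]
      exact mul_nonneg hBnn this

lemma line_estimate {C a : ℝ} (hC : 0 < C) (ha : 2 < a) {f : E3 → E3}
    (hfc : Continuous f) (hdecay : ∀ x, ‖f x‖ ≤ C * (1 + ‖x‖) ^ (-(1 + a)))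
    (η : E3) {v : E3} (hv : v ≠ 0) :
    Integrable (fun u : ℝ => f (η + u • v)) volume ∧
      ∫ u : ℝ, ‖f (η + u • v)‖ ≤
        C * (∫ s : ℝ, (1 + ‖s‖) ^ (-(1 + a))) / ‖v‖ := by
  have hm : 0 < ‖v‖ := norm_pos_iff.mpr hv
  set m : ℝ := ‖v‖ with hmdef
  set c : ℝ := ⟪η, v⟫ / m with hcdef
  have hψ : Integrable (fun s : ℝ => (1 + ‖s‖) ^ (-(1 + a))) volume := by
    apply integrable_one_add_norm (μ := volume)
    rw [Module.finrank_self]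
    push_cast
    linarith
  set K : ℝ := ∫ s : ℝ, (1 + ‖s‖) ^ (-(1 + a)) with hKdef
  -- pointwise bound
  have hptwise : ∀ u : ℝ, ‖f (η + u • v)‖ ≤ C * (1 + ‖c + u * m‖) ^ (-(1 + a)) := by
    intro u
    refine (hdecay _).trans ?_
    apply mul_le_mul_of_nonneg_left _ hC.le
    apply Real.rpow_le_rpow_of_nonpos
    · positivity
    · have hinner : |c + u * m| ≤ ‖η + u • v‖ := by
        have h1 : c + u * m = ⟪η + u • v, v⟫ / m := by
          rw [inner_add_left, real_inner_smul_left, real_inner_self_eq_norm_mul_norm]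
          field_simp [hcdef]
          have hmc : m * c = ⟪η, v⟫ := by rw [hcdef]; field_simp
          rw [← hmdef]; linear_combination hmc
        rw [h1, abs_div, abs_of_pos hm]
        rw [div_le_iff₀ hm]
        exact (abs_real_inner_le_norm _ _)
      rw [Real.norm_eq_abs]
      linarith
    · linarith
  -- integrable majorant
  have hmaj : Integrable (fun u : ℝ => C * (1 + ‖c + u * m‖) ^ (-(1 + a))) volume := by
    have h1 : Integrable (fun x : ℝ => (1 + ‖c + x‖) ^ (-(1 + a))) volume :=
      hψ.comp_add_left c
    have h2 : Integrable (fun u : ℝ => (1 + ‖c + u * m‖) ^ (-(1 + a))) volume :=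
      (MeasureTheory.integrable_comp_mul_right_iff
        (fun x : ℝ => (1 + ‖c + x‖) ^ (-(1 + a))) hm.ne').mpr h1
    exact h2.const_mul C
  have hint : Integrable (fun u : ℝ => f (η + u • v)) volume := by
    refine hmaj.mono' ?_ (Eventually.of_forall (fun u => ?_))
    · exact (hfc.comp (by continuity)).aestronglyMeasurable
    · simpa using hptwise u
  refine ⟨hint, ?_⟩
  have hle : ∫ u : ℝ, ‖f (η + u • v)‖ ≤ ∫ u : ℝ, C * (1 + ‖c + u * m‖) ^ (-(1 + a)) :=
    integral_mono hint.norm hmaj (fun u => hptwise u)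
  refine hle.trans ?_
  have hval : ∫ u : ℝ, C * (1 + ‖c + u * m‖) ^ (-(1 + a)) = C * (K / m) := by
    rw [MeasureTheory.integral_const_mul]
    congr 1
    have h1 : ∫ u : ℝ, (1 + ‖c + u * m‖) ^ (-(1 + a))
        = ∫ u : ℝ, (fun x : ℝ => (1 + ‖c + x‖) ^ (-(1 + a))) (u * m) := rfl
    rw [h1, MeasureTheory.Measure.integral_comp_mul_right (fun x : ℝ => (1 + ‖c + x‖) ^ (-(1 + a))) m]
    rw [MeasureTheory.integral_add_left_eq_self (μ := volume) (fun x : ℝ => (1 + ‖x‖) ^ (-(1 + a))) c]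
    rw [smul_eq_mul, abs_of_pos (inv_pos.mpr hm)]
    rw [← hKdef]
    ring
  rw [hval]
  rw [div_eq_mul_inv, div_eq_mul_inv, mul_assoc]

end FrictionAux

end

set_option maxHeartbeats 2000000 in
open FrictionAux in
/-- Stabilization of the friction term for a tagged particle in a Rayleigh gas:
for a `C¹` potential whose force decays like `(1+|x|)^{-(1+a)}` with `a > 2` and a
compactly supported `C¹` velocity distribution `g`, the double integral defining the
asymptotic friction coefficient is absolutely convergent and the finite-time friction
terms converge to it as `t → ∞`. -/
theorem friction_stabilization
    (Φ : EuclideanSpace ℝ (Fin 3) → ℝ) (hΦ : ContDiff ℝ 1 Φ)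
    (C a : ℝ) (hC : 0 < C) (ha : 2 < a)
    (hdecay : ∀ x, ‖gradient Φ x‖ ≤ C * (1 + ‖x‖) ^ (-(1 + a)))
    (g : EuclideanSpace ℝ (Fin 3) → ℝ) (hg : ContDiff ℝ 1 g)
    (hgsupp : HasCompactSupport g)
    (V : EuclideanSpace ℝ (Fin 3)) :
    Integrable (fun p : EuclideanSpace ℝ (Fin 3) × EuclideanSpace ℝ (Fin 3) =>
        (⟪gradient g p.2, ∫ u in Set.Iic (0:ℝ), gradient Φ (p.1 + u • (p.2 - V))⟫ : ℝ)
          • gradient Φ p.1) (volume.prod volume) ∧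
    Tendsto (fun t : ℝ => ∫ η, ∫ w,
        ((⟪gradient g w, ∫ u in Set.Icc (-t) (0:ℝ), gradient Φ (η + u • (w - V))⟫ : ℝ)
          • gradient Φ η))
      atTop
      (nhds (∫ η, ∫ w,
        ((⟪gradient g w, ∫ u in Set.Iic (0:ℝ), gradient Φ (η + u • (w - V))⟫ : ℝ)
          • gradient Φ η))) := by
  have hgradΦ : gradient Φ
      = fun x => (InnerProductSpace.toDual ℝ E3).symm (fderiv ℝ Φ x) := rfl
  have hgradg : gradient g
      = (fun L => (InnerProductSpace.toDual ℝ E3).symm L) ∘ (fderiv ℝ g) := rfl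
  have hFc : Continuous (gradient Φ) := by
    rw [hgradΦ]
    exact (InnerProductSpace.toDual ℝ E3).symm.continuous.comp (hΦ.continuous_fderiv one_ne_zero)
  have hGc : Continuous (gradient g) := by
    rw [hgradg]
    exact (InnerProductSpace.toDual ℝ E3).symm.continuous.comp (hg.continuous_fderiv one_ne_zero)
  have hGsupp : HasCompactSupport (gradient g) := by
    rw [hgradg]
    exact (hgsupp.fderiv (𝕜 := ℝ)).comp_left (map_zero _)
  -- basic constants
  set K : ℝ := ∫ s : ℝ, (1 + ‖s‖) ^ (-(1 + a)) with hKdef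
  have hK0 : 0 ≤ K := integral_nonneg (fun s => Real.rpow_nonneg (by positivity) _)
  set D : ℝ := C * K with hDdef
  have hD0 : 0 ≤ D := mul_nonneg hC.le hK0
  set W : E3 → ℝ := fun w => ‖gradient g w‖ / ‖w - V‖ with hWdef
  have hW : Integrable W volume := weight_integrable hGc hGsupp V
  have hW0 : 0 ≤ ∫ w, W w := integral_nonneg (fun w => div_nonneg (norm_nonneg _) (norm_nonneg _))
  set W₀ : ℝ := ∫ w, W w with hW₀def
  -- integrability of the force field
  have hFint : Integrable (gradient Φ) volume := by
    have hdim : ((Module.finrank ℝ E3 : ℕ) : ℝ) < 1 + a := by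
      rw [finrank_euclideanSpace_fin]
      push_cast
      linarith
    refine ((integrable_one_add_norm (μ := volume) hdim).const_mul C).mono'
      hFc.aestronglyMeasurable (Eventually.of_forall (fun x => hdecay x))
  -- line estimates
  have hline : ∀ (η w : E3), w ≠ V →
      Integrable (fun u : ℝ => gradient Φ (η + u • (w - V))) volume ∧
        ∫ u : ℝ, ‖gradient Φ (η + u • (w - V))‖ ≤ D / ‖w - V‖ := by
    intro η w hw
    have := line_estimate hC ha hFc hdecay η (sub_ne_zero.mpr hw)
    exact this
  have hIbound : ∀ (η w : E3), w ≠ V → ∀ S : Set ℝ,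
      ‖∫ u in S, gradient Φ (η + u • (w - V))‖ ≤ D / ‖w - V‖ := by
    intro η w hw S
    obtain ⟨hi, hb⟩ := hline η w hw
    calc ‖∫ u in S, gradient Φ (η + u • (w - V))‖
        ≤ ∫ u in S, ‖gradient Φ (η + u • (w - V))‖ := norm_integral_le_integral_norm _
      _ ≤ ∫ u : ℝ, ‖gradient Φ (η + u • (w - V))‖ :=
          setIntegral_le_integral hi.norm (Eventually.of_forall (fun u => norm_nonneg _))
      _ ≤ D / ‖w - V‖ := hb
  -- pointwise bound on the integrand
  have hcore : ∀ (S : Set ℝ) (η w : E3), w ≠ V →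
      ‖((⟪gradient g w, ∫ u in S, gradient Φ (η + u • (w - V))⟫ : ℝ) • gradient Φ η)‖
        ≤ D * (‖gradient Φ η‖ * W w) := by
    intro S η w hw
    calc ‖((⟪gradient g w, ∫ u in S, gradient Φ (η + u • (w - V))⟫ : ℝ) • gradient Φ η)‖
        = |(⟪gradient g w, ∫ u in S, gradient Φ (η + u • (w - V))⟫ : ℝ)| * ‖gradient Φ η‖ := by
          rw [norm_smul, Real.norm_eq_abs]
      _ ≤ (‖gradient g w‖ * (D / ‖w - V‖)) * ‖gradient Φ η‖ := by
          refine mul_le_mul_of_nonneg_right ?_ (norm_nonneg _)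
          exact (abs_real_inner_le_norm _ _).trans
            (mul_le_mul_of_nonneg_left (hIbound η w hw S) (norm_nonneg _))
      _ = D * (‖gradient Φ η‖ * W w) := by
          rw [hWdef]
          simp only []
          field_simp
  -- measurability
  have hsm : ∀ S : Set ℝ, StronglyMeasurable
      (fun p : E3 × E3 => ∫ u in S, gradient Φ (p.1 + u • (p.2 - V))) := by
    intro S
    apply MeasureTheory.StronglyMeasurable.integral_prod_right'
      (f := fun q : (E3 × E3) × ℝ => gradient Φ (q.1.1 + q.2 • (q.1.2 - V)))
    apply Continuous.stronglyMeasurable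
    exact hFc.comp ((continuous_fst.fst).add
      (continuous_snd.smul ((continuous_fst.snd).sub continuous_const)))
  have hsmI : ∀ S : Set ℝ, StronglyMeasurable
      (fun p : E3 × E3 =>
        ((⟪gradient g p.2, ∫ u in S, gradient Φ (p.1 + u • (p.2 - V))⟫ : ℝ)
          • gradient Φ p.1)) := by
    intro S
    have h1 : Measurable (fun p : E3 × E3 =>
        (⟪gradient g p.2, ∫ u in S, gradient Φ (p.1 + u • (p.2 - V))⟫ : ℝ)) :=
      Measurable.inner ((hGc.measurable).comp measurable_snd) (hsm S).measurable
    exact (h1.smul ((hFc.measurable).comp measurable_fst)).stronglyMeasurable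
  -- a.e. w ≠ V
  have hVnull : (volume : Measure E3) {V} = 0 := measure_singleton V
  have haeV : ∀ᵐ w : E3 ∂volume, w ≠ V := by
    rw [MeasureTheory.ae_iff]
    refine measure_mono_null (fun w hw => ?_) hVnull
    simpa using hw
  have haeV2 : ∀ᵐ p : E3 × E3 ∂(volume.prod volume), p.2 ≠ V := by
    rw [MeasureTheory.ae_iff]
    refine measure_mono_null (t := Set.univ ×ˢ ({V} : Set E3))
      (fun p hp => ⟨Set.mem_univ _, by simpa using hp⟩) ?_
    rw [Measure.prod_prod, hVnull, mul_zero]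
  constructor
  · -- product integrability
    refine Integrable.mono'
      ((hFint.norm.mul_prod hW).const_mul D) (hsmI (Set.Iic 0)).aestronglyMeasurable ?_
    filter_upwards [haeV2] with p hp
    exact hcore (Set.Iic 0) p.1 p.2 hp
  · -- convergence
    have htend_u : ∀ (η w : E3), w ≠ V →
        Tendsto (fun t : ℝ => ∫ u in Set.Icc (-t) (0:ℝ), gradient Φ (η + u • (w - V)))
          atTop (nhds (∫ u in Set.Iic (0:ℝ), gradient Φ (η + u • (w - V)))) := by
      intro η w hw
      set φ : ℝ → E3 := fun u => gradient Φ (η + u • (w - V)) with hφdef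
      obtain ⟨hφint, -⟩ := hline η w hw
      have hrw : ∀ t : ℝ, ∫ u in Set.Icc (-t) (0:ℝ), φ u
          = ∫ u : ℝ, (Set.Icc (-t) (0:ℝ)).indicator φ u := by
        intro t
        rw [integral_indicator measurableSet_Icc]
      have hrw2 : ∫ u in Set.Iic (0:ℝ), φ u = ∫ u : ℝ, (Set.Iic (0:ℝ)).indicator φ u := by
        rw [integral_indicator measurableSet_Iic]
      simp only [hrw, hrw2]
      apply tendsto_integral_filter_of_dominated_convergence (bound := fun u => ‖φ u‖)
      · exact Eventually.of_forall (fun t =>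
          (hφint.aestronglyMeasurable.indicator measurableSet_Icc))
      · exact Eventually.of_forall (fun t => Eventually.of_forall (fun u =>
          norm_indicator_le_norm_self (f := φ) (a := u)))
      · exact hφint.norm
      · refine Eventually.of_forall (fun u => ?_)
        by_cases hu : u ≤ 0
        · have heq : ∀ᶠ t in (atTop : Filter ℝ),
              (Set.Iic (0:ℝ)).indicator φ u = (Set.Icc (-t) (0:ℝ)).indicator φ u := by
            filter_upwards [eventually_ge_atTop (-u)] with t ht
            rw [Set.indicator_of_mem (Set.mem_Icc.mpr ⟨by linarith, hu⟩),
              Set.indicator_of_mem (Set.mem_Iic.mpr hu)]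
          exact Tendsto.congr' heq tendsto_const_nhds
        · push_neg at hu
          have heq : ∀ t : ℝ, (Set.Icc (-t) (0:ℝ)).indicator φ u = 0 := fun t =>
            Set.indicator_of_notMem (s := Set.Icc (-t) (0:ℝ))
              (fun hm => absurd (Set.mem_Icc.mp hm).2 (not_le.mpr hu)) _
          have heq2 : (Set.Iic (0:ℝ)).indicator φ u = 0 :=
            Set.indicator_of_notMem (s := Set.Iic (0:ℝ)) (by simpa using not_le.mpr hu) _
          simp only [heq, heq2]
          exact tendsto_const_nhds
    have htend_w : ∀ η : E3,
        Tendsto (fun t : ℝ => ∫ w,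
          ((⟪gradient g w, ∫ u in Set.Icc (-t) (0:ℝ), gradient Φ (η + u • (w - V))⟫ : ℝ)
            • gradient Φ η))
          atTop (nhds (∫ w,
          ((⟪gradient g w, ∫ u in Set.Iic (0:ℝ), gradient Φ (η + u • (w - V))⟫ : ℝ)
            • gradient Φ η))) := by
      intro η
      apply tendsto_integral_filter_of_dominated_convergence
        (bound := fun w => D * (‖gradient Φ η‖ * W w))
      · refine Eventually.of_forall (fun t => ?_)
        have h1 : StronglyMeasurable (fun w : E3 =>
            ∫ u in Set.Icc (-t) (0:ℝ), gradient Φ (η + u • (w - V))) :=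
          (hsm (Set.Icc (-t) 0)).comp_measurable (measurable_const.prodMk measurable_id)
        have h2 : Measurable (fun w : E3 =>
            (⟪gradient g w, ∫ u in Set.Icc (-t) (0:ℝ), gradient Φ (η + u • (w - V))⟫ : ℝ)) :=
          Measurable.inner hGc.measurable h1.measurable
        exact (h2.smul measurable_const).stronglyMeasurable.aestronglyMeasurable
      · refine Eventually.of_forall (fun t => ?_)
        filter_upwards [haeV] with w hw
        exact hcore (Set.Icc (-t) 0) η w hw
      · exact (hW.const_mul _).const_mul D
      · filter_upwards [haeV] with w hw
        exact (Tendsto.inner tendsto_const_nhds (htend_u η w hw)).smul_const _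
    apply tendsto_integral_filter_of_dominated_convergence
      (bound := fun η => D * W₀ * ‖gradient Φ η‖)
    · exact Eventually.of_forall (fun t =>
        ((hsmI (Set.Icc (-t) 0)).integral_prod_right').aestronglyMeasurable)
    · refine Eventually.of_forall (fun t => Eventually.of_forall (fun η => ?_))
      have hb : ‖∫ w, ((⟪gradient g w,
            ∫ u in Set.Icc (-t) (0:ℝ), gradient Φ (η + u • (w - V))⟫ : ℝ)
              • gradient Φ η)‖ ≤ ∫ w, D * (‖gradient Φ η‖ * W w) := by
        apply norm_integral_le_of_norm_le ((hW.const_mul _).const_mul D)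
        filter_upwards [haeV] with w hw
        exact hcore (Set.Icc (-t) 0) η w hw
      refine hb.trans ?_
      rw [MeasureTheory.integral_const_mul, MeasureTheory.integral_const_mul, ← hW₀def]
      ring_nf
      exact le_refl _
    · exact hFint.norm.const_mul _
    · exact Eventually.of_forall htend_w
end

section
/- Let Φ : ℝ³ → ℝ be continuously differentiable and suppose there exist constants C > 0 and a > 2 such that |∇Φ(x)| ≤ C (1 + |x|)^{-(1+a)} for all x ∈ ℝ³. Let g : ℝ³ → [0,∞) be measurable and let v ∈ ℝ³. Then ∫₀^∞ ∫_{ℝ³} ∫_{ℝ³} |∇Φ(y + s·(w − v))| · |∇Φ(y)| · g(w) dw dy ds ≤ (2C/a) (∫_{ℝ³} |∇Φ(y)| dy) ∫_{ℝ³} g(w)/|w − v| dw; in particular, the triple integral is finite whenever ∫_{ℝ³} g(w)/|w − v| dw < ∞. -/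
open MeasureTheory Set ENNReal

lemma aux_oneD {a : ℝ} (ha : 0 < a) :
    ∫⁻ t : ℝ, ENNReal.ofReal ((1 + |t|) ^ (-(1 + a))) = ENNReal.ofReal (2 / a) := by
  have hr3 : (1 : ℝ) < 1 + a := by linarith
  have hint : Integrable (fun t : ℝ => (1 + |t|) ^ (-(1 + a))) := by
    have h := integrable_one_add_norm (E := ℝ) (μ := volume) (r := 1 + a) (by simpa using hr3)
    simpa [Real.norm_eq_abs] using h
  rw [← ofReal_integral_eq_lintegral_ofReal hint
    (Filter.Eventually.of_forall fun t => Real.rpow_nonneg (by positivity) _)]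
  congr 1
  have h1 : (∫ t : ℝ, (1 + |t|) ^ (-(1 + a)))
      = 2 * ∫ t in Ioi (0:ℝ), (1 + t) ^ (-(1 + a)) :=
    integral_comp_abs (f := fun x => (1 + x) ^ (-(1 + a)))
  have h2 : (∫ t in Ioi (0:ℝ), (1 + t) ^ (-(1 + a)))
      = ∫ t in Ioi (1:ℝ), t ^ (-(1 + a)) := by
    have h := (measurePreserving_add_right (volume : Measure ℝ) 1).setIntegral_preimage_emb
      (measurableEmbedding_addRight 1) (fun t => t ^ (-(1 + a))) (Ioi (1:ℝ))
    have hpre : (fun x : ℝ => x + 1) ⁻¹' Ioi (1:ℝ) = Ioi 0 := by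
      ext x; simp
    rw [hpre] at h
    rw [← h]
    exact setIntegral_congr_fun measurableSet_Ioi fun x _ => by rw [add_comm]
  rw [h1, h2, integral_Ioi_rpow_of_lt (by linarith) one_pos, Real.one_rpow]
  have haz : a ≠ 0 := ne_of_gt ha
  field_simp
  rw [show -(1 + a) + 1 = -a by ring, div_neg, neg_neg, div_self haz]

lemma aux_cov {f : ℝ → ℝ≥0∞} (hf : Measurable f) {r : ℝ} (hr : 0 < r) (c : ℝ) :
    ∫⁻ s : ℝ, f (r * s + c) = ENNReal.ofReal r⁻¹ * ∫⁻ t, f t := by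
  have h1 : ∫⁻ t, f (t + c) ∂(Measure.map (r * ·) volume) = ∫⁻ s : ℝ, f (r * s + c) :=
    lintegral_map (hf.comp (measurable_add_const c)) (measurable_const_mul r)
  rw [← h1, Real.map_volume_mul_left (ne_of_gt hr), lintegral_smul_measure,
    lintegral_add_right_eq_self (fun t => f t) c, abs_inv, abs_of_pos hr, smul_eq_mul]

lemma aux_line (Φ : EuclideanSpace ℝ (Fin 3) → ℝ) (hcont : Continuous (gradient Φ))
    {C a : ℝ} (hC : 0 < C) (ha : 2 < a)
    (hdecay : ∀ x, ‖gradient Φ x‖ ≤ C * (1 + ‖x‖) ^ (-(1 + a)))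
    (y z : EuclideanSpace ℝ (Fin 3)) (hz : z ≠ 0) :
    ∫⁻ s in Ioi (0:ℝ), ENNReal.ofReal ‖gradient Φ (y + s • z)‖
      ≤ ENNReal.ofReal (2 * C / a) * ENNReal.ofReal (1 / ‖z‖) := by
  have hrpos : (0:ℝ) < ‖z‖ := norm_pos_iff.mpr hz
  set r : ℝ := ‖z‖ with hrdef
  set c : ℝ := (inner ℝ y z : ℝ) / r with hcdef
  have key : ∀ s : ℝ, |r * s + c| ≤ ‖y + s • z‖ := by
    intro s
    have hsq : (r * s + c) ^ 2 ≤ ‖y + s • z‖ ^ 2 := by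
      have hns : ‖y + s • z‖ ^ 2 = ‖y‖ ^ 2 + 2 * (s * (inner ℝ y z : ℝ)) + s ^ 2 * r ^ 2 := by
        rw [@norm_add_sq_real, real_inner_smul_right, norm_smul]
        simp [Real.norm_eq_abs, mul_pow, sq_abs, hrdef]
      have hcs : c ^ 2 ≤ ‖y‖ ^ 2 := by
        have h := abs_real_inner_le_norm y z
        rw [hcdef, div_pow]
        rw [div_le_iff₀ (by positivity)]
        calc (inner ℝ y z : ℝ) ^ 2 = |(inner ℝ y z : ℝ)| ^ 2 := (sq_abs _).symm
          _ ≤ (‖y‖ * ‖z‖) ^ 2 := pow_le_pow_left₀ (abs_nonneg _) h 2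
          _ = ‖y‖ ^ 2 * r ^ 2 := by rw [mul_pow]
      have hrc : r * c = (inner ℝ y z : ℝ) := by
        rw [hcdef, mul_div_cancel₀]; exact ne_of_gt hrpos
      have hexp : (r * s + c) ^ 2 = s ^ 2 * r ^ 2 + 2 * (s * (inner ℝ y z : ℝ)) + c ^ 2 := by
        rw [← hrc]; ring
      linarith [hns, hcs, hexp]
    calc |r * s + c| = Real.sqrt ((r * s + c) ^ 2) := (Real.sqrt_sq_eq_abs _).symm
      _ ≤ Real.sqrt (‖y + s • z‖ ^ 2) := Real.sqrt_le_sqrt hsq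
      _ = ‖y + s • z‖ := Real.sqrt_sq (norm_nonneg _)
  have hpt : ∀ s : ℝ, ‖gradient Φ (y + s • z)‖ ≤ C * (1 + |r * s + c|) ^ (-(1 + a)) := by
    intro s
    refine (hdecay _).trans ?_
    exact mul_le_mul_of_nonneg_left
      (Real.rpow_le_rpow_of_nonpos (by positivity) (by linarith [key s]) (by linarith)) hC.le
  calc ∫⁻ s in Ioi (0:ℝ), ENNReal.ofReal ‖gradient Φ (y + s • z)‖
      ≤ ∫⁻ s in Ioi (0:ℝ), ENNReal.ofReal (C * (1 + |r * s + c|) ^ (-(1 + a))) := by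
        exact lintegral_mono fun s => ENNReal.ofReal_le_ofReal (hpt s)
    _ ≤ ∫⁻ s : ℝ, ENNReal.ofReal (C * (1 + |r * s + c|) ^ (-(1 + a))) :=
        setLIntegral_le_lintegral _ _
    _ = ∫⁻ s : ℝ, ENNReal.ofReal C * ENNReal.ofReal ((1 + |r * s + c|) ^ (-(1 + a))) := by
        simp_rw [ENNReal.ofReal_mul hC.le]
    _ = ENNReal.ofReal C * ∫⁻ s : ℝ, ENNReal.ofReal ((1 + |r * s + c|) ^ (-(1 + a))) :=
        lintegral_const_mul' _ _ ENNReal.ofReal_ne_top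
    _ = ENNReal.ofReal C * (ENNReal.ofReal r⁻¹ * ENNReal.ofReal (2 / a)) := by
        rw [aux_cov (f := fun t => ENNReal.ofReal ((1 + |t|) ^ (-(1 + a))))
          (by
            apply ENNReal.measurable_ofReal.comp
            exact ((continuous_const.add continuous_abs).rpow_const
              (fun t => Or.inl (by show (1:ℝ) + |t| ≠ 0; positivity))).measurable) hrpos c,
          aux_oneD (by linarith : (0:ℝ) < a)]
    _ = ENNReal.ofReal (2 * C / a) * ENNReal.ofReal (1 / r) := by
        rw [← ENNReal.ofReal_mul (by positivity : (0:ℝ) ≤ r⁻¹), ← ENNReal.ofReal_mul hC.le,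
          ← ENNReal.ofReal_mul (div_nonneg (by linarith) (by linarith))]
        congr 1
        field_simp

/-- Absolute-convergence bound for the grazing-collision diffusion and friction integrals:
`∫₀^∞ ∫∫ |∇Φ(y + s(w−v))| |∇Φ(y)| g(w) dw dy ds ≤ (2C/a)(∫|∇Φ|) ∫ g(w)/|w−v| dw`,
finite whenever `∫ g(w)/|w−v| dw < ∞`. -/
theorem grazing_absolute_convergence
    (Φ : EuclideanSpace ℝ (Fin 3) → ℝ) (hΦ : ContDiff ℝ 1 Φ)
    (C a : ℝ) (hC : 0 < C) (ha : 2 < a)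
    (hdecay : ∀ x, ‖gradient Φ x‖ ≤ C * (1 + ‖x‖) ^ (-(1 + a)))
    (g : EuclideanSpace ℝ (Fin 3) → ℝ) (hg_meas : Measurable g)
    (hg_nonneg : ∀ w, 0 ≤ g w)
    (v : EuclideanSpace ℝ (Fin 3)) :
    (∫⁻ s in Set.Ioi (0:ℝ), ∫⁻ y, ∫⁻ w, ENNReal.ofReal
        (‖gradient Φ (y + s • (w - v))‖ * ‖gradient Φ y‖ * g w))
      ≤ ENNReal.ofReal ((2 * C / a) * ∫ y, ‖gradient Φ y‖)
          * ∫⁻ w, ENNReal.ofReal (g w / ‖w - v‖) ∧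
    ((∫⁻ w, ENNReal.ofReal (g w / ‖w - v‖)) < ⊤ →
      (∫⁻ s in Set.Ioi (0:ℝ), ∫⁻ y, ∫⁻ w, ENNReal.ofReal
        (‖gradient Φ (y + s • (w - v))‖ * ‖gradient Φ y‖ * g w)) < ⊤) := by
  have hcont : Continuous (gradient Φ) := by
    have h := hΦ.continuous_fderiv one_ne_zero
    exact (InnerProductSpace.toDual ℝ (EuclideanSpace ℝ (Fin 3))).symm.continuous.comp h
  have hnorm : Continuous fun x => ‖gradient Φ x‖ := hcont.norm
  -- integrability of ‖∇Φ‖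
  have hfr : ((Module.finrank ℝ (EuclideanSpace ℝ (Fin 3))) : ℝ) < 1 + a := by
    simp only [finrank_euclideanSpace, Fintype.card_fin]
    push_cast; linarith
  have hmaj : Integrable (fun x : EuclideanSpace ℝ (Fin 3) => C * (1 + ‖x‖) ^ (-(1 + a))) :=
    (integrable_one_add_norm (μ := volume) hfr).const_mul C
  have hint : Integrable (fun y : EuclideanSpace ℝ (Fin 3) => ‖gradient Φ y‖) :=
    hmaj.mono' hnorm.aestronglyMeasurable
      (Filter.Eventually.of_forall fun x => by rw [norm_norm]; exact hdecay x)
  have hB : (∫⁻ y, ENNReal.ofReal ‖gradient Φ y‖)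
      = ENNReal.ofReal (∫ y, ‖gradient Φ y‖) :=
    (ofReal_integral_eq_lintegral_ofReal hint
      (Filter.Eventually.of_forall fun x => norm_nonneg _)).symm
  set W : ℝ≥0∞ := ∫⁻ w, ENNReal.ofReal (g w / ‖w - v‖) with hW
  -- measurability of the full integrand
  have hQ : Measurable fun p : (ℝ × EuclideanSpace ℝ (Fin 3)) × EuclideanSpace ℝ (Fin 3) =>
      ENNReal.ofReal (‖gradient Φ (p.1.2 + p.1.1 • (p.2 - v))‖ * ‖gradient Φ p.1.2‖ * g p.2) := by
    apply ENNReal.measurable_ofReal.comp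
    apply Measurable.mul
    · apply Measurable.mul
      · exact (hnorm.comp (by fun_prop)).measurable
      · exact (hnorm.comp (continuous_snd.comp continuous_fst)).measurable
    · exact hg_meas.comp measurable_snd
  -- step 1: swap s and y
  have swap1 : (∫⁻ s in Ioi (0:ℝ), ∫⁻ y, ∫⁻ w, ENNReal.ofReal
        (‖gradient Φ (y + s • (w - v))‖ * ‖gradient Φ y‖ * g w))
      = ∫⁻ y, ∫⁻ s in Ioi (0:ℝ), ∫⁻ w, ENNReal.ofReal
        (‖gradient Φ (y + s • (w - v))‖ * ‖gradient Φ y‖ * g w) := by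
    exact lintegral_lintegral_swap (hQ.lintegral_prod_right'.aemeasurable)
  -- step 2: for fixed y, swap s and w
  have swap2 : ∀ y : EuclideanSpace ℝ (Fin 3),
      (∫⁻ s in Ioi (0:ℝ), ∫⁻ w, ENNReal.ofReal
        (‖gradient Φ (y + s • (w - v))‖ * ‖gradient Φ y‖ * g w))
      = ∫⁻ w, ∫⁻ s in Ioi (0:ℝ), ENNReal.ofReal
        (‖gradient Φ (y + s • (w - v))‖ * ‖gradient Φ y‖ * g w) := by
    intro y
    apply lintegral_lintegral_swap
    refine Measurable.aemeasurable ?_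
    apply ENNReal.measurable_ofReal.comp
    apply Measurable.mul
    · apply Measurable.mul
      · exact (hnorm.comp
          (by fun_prop : Continuous fun p : ℝ × EuclideanSpace ℝ (Fin 3)
            => y + p.1 • (p.2 - v))).measurable
      · exact measurable_const
    · exact hg_meas.comp measurable_snd
  have hae : ∀ᵐ w : EuclideanSpace ℝ (Fin 3), w ≠ v := by
    refine ae_iff.mpr ?_
    simpa using measure_singleton v
  have inner_bound : ∀ y : EuclideanSpace ℝ (Fin 3),
      (∫⁻ w, ∫⁻ s in Ioi (0:ℝ), ENNReal.ofReal
        (‖gradient Φ (y + s • (w - v))‖ * ‖gradient Φ y‖ * g w))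
      ≤ ENNReal.ofReal ‖gradient Φ y‖ * (ENNReal.ofReal (2 * C / a) * W) := by
    intro y
    have step : ∀ᵐ w : EuclideanSpace ℝ (Fin 3), (∫⁻ s in Ioi (0:ℝ), ENNReal.ofReal
          (‖gradient Φ (y + s • (w - v))‖ * ‖gradient Φ y‖ * g w))
        ≤ ENNReal.ofReal ‖gradient Φ y‖ * ENNReal.ofReal (2 * C / a)
            * ENNReal.ofReal (g w / ‖w - v‖) := by
      filter_upwards [hae] with w hw
      have hwz : w - v ≠ 0 := sub_ne_zero.mpr hw
      have heq : ∀ s : ℝ, ENNReal.ofReal (‖gradient Φ (y + s • (w - v))‖ * ‖gradient Φ y‖ * g w)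
          = ENNReal.ofReal (‖gradient Φ y‖ * g w)
            * ENNReal.ofReal ‖gradient Φ (y + s • (w - v))‖ := by
        intro s
        rw [← ENNReal.ofReal_mul (mul_nonneg (norm_nonneg _) (hg_nonneg w))]
        congr 1; ring
      calc (∫⁻ s in Ioi (0:ℝ), ENNReal.ofReal
              (‖gradient Φ (y + s • (w - v))‖ * ‖gradient Φ y‖ * g w))
          = ENNReal.ofReal (‖gradient Φ y‖ * g w)
              * ∫⁻ s in Ioi (0:ℝ), ENNReal.ofReal ‖gradient Φ (y + s • (w - v))‖ := by
            simp_rw [heq]; exact lintegral_const_mul' _ _ ENNReal.ofReal_ne_top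
        _ ≤ ENNReal.ofReal (‖gradient Φ y‖ * g w)
              * (ENNReal.ofReal (2 * C / a) * ENNReal.ofReal (1 / ‖w - v‖)) :=
            mul_le_mul_right (aux_line Φ hcont hC ha hdecay y (w - v) hwz) _
        _ = ENNReal.ofReal ‖gradient Φ y‖ * ENNReal.ofReal (2 * C / a)
              * ENNReal.ofReal (g w / ‖w - v‖) := by
            rw [ENNReal.ofReal_mul (norm_nonneg _),
              show g w / ‖w - v‖ = g w * (1 / ‖w - v‖) from (mul_one_div _ _).symm,
              ENNReal.ofReal_mul (hg_nonneg w)]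
            ring
    calc (∫⁻ w, ∫⁻ s in Ioi (0:ℝ), ENNReal.ofReal
            (‖gradient Φ (y + s • (w - v))‖ * ‖gradient Φ y‖ * g w))
        ≤ ∫⁻ w, ENNReal.ofReal ‖gradient Φ y‖ * ENNReal.ofReal (2 * C / a)
            * ENNReal.ofReal (g w / ‖w - v‖) := lintegral_mono_ae step
      _ = ENNReal.ofReal ‖gradient Φ y‖ * ENNReal.ofReal (2 * C / a) * W :=
          lintegral_const_mul' _ _
            (ENNReal.mul_ne_top ENNReal.ofReal_ne_top ENNReal.ofReal_ne_top)
      _ = ENNReal.ofReal ‖gradient Φ y‖ * (ENNReal.ofReal (2 * C / a) * W) := mul_assoc _ _ _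
  have main : (∫⁻ s in Set.Ioi (0:ℝ), ∫⁻ y, ∫⁻ w, ENNReal.ofReal
        (‖gradient Φ (y + s • (w - v))‖ * ‖gradient Φ y‖ * g w))
      ≤ ENNReal.ofReal ((2 * C / a) * ∫ y, ‖gradient Φ y‖) * W := by
    rw [swap1]
    calc (∫⁻ y, ∫⁻ s in Ioi (0:ℝ), ∫⁻ w, ENNReal.ofReal
            (‖gradient Φ (y + s • (w - v))‖ * ‖gradient Φ y‖ * g w))
        = ∫⁻ y, ∫⁻ w, ∫⁻ s in Ioi (0:ℝ), ENNReal.ofReal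
            (‖gradient Φ (y + s • (w - v))‖ * ‖gradient Φ y‖ * g w) :=
          lintegral_congr fun y => swap2 y
      _ ≤ ∫⁻ y, ENNReal.ofReal ‖gradient Φ y‖ * (ENNReal.ofReal (2 * C / a) * W) :=
          lintegral_mono inner_bound
      _ = (∫⁻ y, ENNReal.ofReal ‖gradient Φ y‖) * (ENNReal.ofReal (2 * C / a) * W) :=
          lintegral_mul_const'' _ (ENNReal.measurable_ofReal.comp hnorm.measurable).aemeasurable
      _ = ENNReal.ofReal ((2 * C / a) * ∫ y, ‖gradient Φ y‖) * W := by
          rw [hB, ENNReal.ofReal_mul (div_nonneg (by linarith) (by linarith))]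
          ring
  exact ⟨main, fun hWfin => lt_of_le_of_lt main
    (ENNReal.mul_lt_top ENNReal.ofReal_lt_top hWfin)⟩
end

section
/- Let K : ℝ → ℝ be locally integrable and suppose that lim_{s→+∞} s·K(s) = Γ₊ and lim_{s→−∞} |s|·K(s) = Γ₋ for some real numbers Γ₊, Γ₋. Then lim_{T→∞} (1/(T·log T)) ∫₀^T ( ∫_{−t}^{T−t} K(s) ds ) dt = Γ₊ + Γ₋. -/
open MeasureTheory Filter

open intervalIntegral in
private lemma coulomb_ratio_aux
    (f g : ℝ → ℝ) (a L : ℝ)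
    (hfi : ∀ b, a ≤ b → IntervalIntegrable f volume a b)
    (hgi : ∀ b, a ≤ b → IntervalIntegrable g volume a b)
    (hg0 : ∀ᶠ s in atTop, 0 < g s)
    (hGt : Tendsto (fun T => ∫ s in a..T, g s) atTop atTop)
    (hfg : Tendsto (fun s => f s / g s) atTop (nhds L)) :
    Tendsto (fun T => (∫ s in a..T, f s) / (∫ s in a..T, g s)) atTop (nhds L) := by
  set φ : ℝ → ℝ := fun T => ∫ s in a..T, f s with hφdef
  set ψ : ℝ → ℝ := fun T => ∫ s in a..T, g s with hψdef
  have hlo : (fun T => φ T - L * ψ T) =o[atTop] ψ := by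
    rw [Asymptotics.isLittleO_iff]
    intro c hc
    have hdist : ∀ᶠ s in atTop, dist (f s / g s) L < c / 2 :=
      Metric.tendsto_nhds.mp hfg (c / 2) (half_pos hc)
    obtain ⟨M, hM⟩ := eventually_atTop.mp ((hg0.and hdist).and (eventually_ge_atTop a))
    have haM : a ≤ M := (hM M le_rfl).2
    set D : ℝ := |φ M - L * ψ M| + c / 2 * |ψ M| with hD
    have hD0 : 0 ≤ D := by positivity
    filter_upwards [eventually_ge_atTop M, hGt.eventually_ge_atTop (2 / c * D),
      hGt.eventually_ge_atTop 0] with T hMT hψD hψ0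
    have haT : a ≤ T := haM.trans hMT
    have hfMT : IntervalIntegrable f volume M T := ((hfi M haM).symm.trans (hfi T haT))
    have hgMT : IntervalIntegrable g volume M T := ((hgi M haM).symm.trans (hgi T haT))
    have hφs : φ M + (∫ s in M..T, f s) = φ T :=
      integral_add_adjacent_intervals (hfi M haM) hfMT
    have hψs : ψ M + (∫ s in M..T, g s) = ψ T :=
      integral_add_adjacent_intervals (hgi M haM) hgMT
    have hbound : ∀ s ∈ Set.Icc M T, |f s - L * g s| ≤ c / 2 * g s := by
      intro s hs
      obtain ⟨⟨hgs, hds⟩, -⟩ := hM s hs.1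
      rw [Real.dist_eq] at hds
      have : f s - L * g s = (f s / g s - L) * g s := by field_simp
      rw [this, abs_mul, abs_of_pos hgs]
      exact mul_le_mul_of_nonneg_right hds.le hgs.le
    have h1 : |∫ s in M..T, f s - L * g s| ≤ c / 2 * (ψ T - ψ M) := by
      calc |∫ s in M..T, f s - L * g s| ≤ ∫ s in M..T, |f s - L * g s| :=
            abs_integral_le_integral_abs hMT
        _ ≤ ∫ s in M..T, c / 2 * g s := by
            refine integral_mono_on hMT ((hfMT.sub (hgMT.const_mul L)).abs)
              (hgMT.const_mul (c / 2)) hbound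
        _ = c / 2 * (ψ T - ψ M) := by
            rw [intervalIntegral.integral_const_mul]
            have : (∫ s in M..T, g s) = ψ T - ψ M := by linarith
            rw [this]
    have h2 : (∫ s in M..T, f s - L * g s) = (φ T - L * ψ T) - (φ M - L * ψ M) := by
      rw [integral_sub hfMT (hgMT.const_mul L), intervalIntegral.integral_const_mul]
      have hf' : (∫ s in M..T, f s) = φ T - φ M := by linarith
      have hg' : (∫ s in M..T, g s) = ψ T - ψ M := by linarith
      rw [hf', hg']; ring
    rw [h2] at h1
    have hDψ : D ≤ c / 2 * ψ T := by
      have : 2 / c * D * (c / 2) ≤ ψ T * (c / 2) := mul_le_mul_of_nonneg_right hψD (by positivity)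
      calc D = 2 / c * D * (c / 2) := by field_simp
        _ ≤ ψ T * (c / 2) := this
        _ = c / 2 * ψ T := by ring
    have : |φ T - L * ψ T| ≤ c * ψ T := by
      have h3 : |φ T - L * ψ T| ≤ |φ M - L * ψ M| + c / 2 * (ψ T - ψ M) := by
        have h := abs_add_le (φ T - L * ψ T - (φ M - L * ψ M)) (φ M - L * ψ M)
        rw [sub_add_cancel] at h
        linarith
      have h4 : c / 2 * (ψ T - ψ M) ≤ c / 2 * ψ T + c / 2 * |ψ M| := by
        have := neg_abs_le (ψ M)
        nlinarith
      calc |φ T - L * ψ T| ≤ |φ M - L * ψ M| + c / 2 * (ψ T - ψ M) := h3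
        _ ≤ D + c / 2 * ψ T := by rw [hD]; linarith
        _ ≤ c / 2 * ψ T + c / 2 * ψ T := by linarith
        _ = c * ψ T := by ring
    simpa [Real.norm_eq_abs, abs_of_nonneg hψ0] using this
  have hψne : ∀ᶠ T in atTop, ψ T ≠ 0 :=
    (hGt.eventually_ge_atTop 1).mono fun T hT => by linarith
  have h0 : Tendsto (fun T => (φ T - L * ψ T) / ψ T) atTop (nhds 0) :=
    hlo.tendsto_div_nhds_zero
  have hadd : Tendsto (fun T => L + (φ T - L * ψ T) / ψ T) atTop (nhds L) := by
    simpa using tendsto_const_nhds.add h0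
  refine hadd.congr' ?_
  filter_upwards [hψne] with T hT
  show _ = φ T / ψ T
  rw [eq_div_iff hT, add_mul, div_mul_cancel₀ _ hT]; ring

/-- The Coulombian-logarithm asymptotics: if `K` is locally integrable with
`s K(s) → Γ₊` as `s → +∞` and `|s| K(s) → Γ₋` as `s → −∞`, then
`(1/(T log T)) ∫₀^T ∫_{−t}^{T−t} K(s) ds dt → Γ₊ + Γ₋` as `T → ∞`. -/
theorem coulomb_logarithm_asymptotics
    (K : ℝ → ℝ) (hK : LocallyIntegrable K volume) (Γp Γm : ℝ)
    (hp : Tendsto (fun s : ℝ => s * K s) atTop (nhds Γp))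
    (hm : Tendsto (fun s : ℝ => |s| * K s) atBot (nhds Γm)) :
    Tendsto (fun T : ℝ =>
        (T * Real.log T)⁻¹ * ∫ t in (0:ℝ)..T, ∫ s in (-t)..(T - t), K s)
      atTop (nhds (Γp + Γm)) := by
  open intervalIntegral in
  have hKint : ∀ a b : ℝ, IntervalIntegrable K volume a b := by
    intro a b
    rw [intervalIntegrable_iff]
    exact (hK.integrableOn_isCompact isCompact_uIcc).mono_set Set.uIoc_subset_uIcc
  have hKneg : ∀ a b : ℝ, IntervalIntegrable (fun s => K (-s)) volume a b := by
    intro a b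
    simpa using (IntervalIntegrable.iff_comp_neg (f := K) (a := -a) (b := -b)).mp (hKint (-a) (-b))
  set H : ℝ → ℝ := fun x => ∫ s in (0:ℝ)..x, K s with hHdef
  have hHc : Continuous H := intervalIntegral.continuous_primitive hKint 0
  set G : ℝ → ℝ := fun t => H t - H (-t) with hGdef
  have hGc : Continuous G := hHc.sub (hHc.comp continuous_neg)
  set f₁ : ℝ → ℝ := fun s => K s + K (-s) with hf₁def
  have hf₁int : ∀ a b : ℝ, IntervalIntegrable f₁ volume a b :=
    fun a b => (hKint a b).add (hKneg a b)
  -- G t = ∫_0^t (K s + K (-s))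
  have hGeq : ∀ t : ℝ, G t = ∫ s in (0:ℝ)..t, f₁ s := by
    intro t
    rw [hf₁def]
    rw [intervalIntegral.integral_add (hKint 0 t) (hKneg 0 t)]
    have h1 : (∫ s in (0:ℝ)..t, K (-s)) = ∫ s in (-t)..(0:ℝ), K s := by
      simpa using intervalIntegral.integral_comp_neg (a := (0:ℝ)) (b := t) K
    have h2 : (∫ s in (0:ℝ)..(-t), K s) + (∫ s in (-t)..(0:ℝ), K s) = ∫ s in (0:ℝ)..(0:ℝ), K s :=
      intervalIntegral.integral_add_adjacent_intervals (hKint 0 (-t)) (hKint (-t) 0)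
    simp only [intervalIntegral.integral_same] at h2
    simp only [hGdef, hHdef, h1]
    linarith
  -- inner integral identity and Fubini-free reduction
  have key : ∀ T : ℝ, (∫ t in (0:ℝ)..T, ∫ s in (-t)..(T - t), K s) = ∫ t in (0:ℝ)..T, G t := by
    intro T
    have hinner : ∀ t : ℝ, (∫ s in (-t)..(T - t), K s) = H (T - t) - H (-t) := by
      intro t
      have h2 := intervalIntegral.integral_add_adjacent_intervals
        (hKint 0 (-t)) (hKint (-t) (T - t))
      simp only [hHdef]
      linarith
    have e1 : (∫ t in (0:ℝ)..T, ∫ s in (-t)..(T - t), K s)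
        = ∫ t in (0:ℝ)..T, (H (T - t) - H (-t)) :=
      intervalIntegral.integral_congr fun t _ => hinner t
    have iH1 : IntervalIntegrable (fun t => H (T - t)) volume 0 T :=
      (hHc.comp (continuous_const.sub continuous_id)).intervalIntegrable 0 T
    have iH2 : IntervalIntegrable (fun t => H (-t)) volume 0 T :=
      (hHc.comp continuous_neg).intervalIntegrable 0 T
    have e2 : (∫ t in (0:ℝ)..T, (H (T - t) - H (-t)))
        = (∫ t in (0:ℝ)..T, H (T - t)) - ∫ t in (0:ℝ)..T, H (-t) :=
      intervalIntegral.integral_sub iH1 iH2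
    have e3 : (∫ t in (0:ℝ)..T, H (T - t)) = ∫ t in (0:ℝ)..T, H t := by
      simpa using intervalIntegral.integral_comp_sub_left (a := (0:ℝ)) (b := T) H T
    have e5 : (∫ t in (0:ℝ)..T, G t)
        = (∫ t in (0:ℝ)..T, H t) - ∫ t in (0:ℝ)..T, H (-t) := by
      simp only [hGdef]
      exact intervalIntegral.integral_sub (hHc.intervalIntegrable 0 T) iH2
    rw [e1, e2, e3, e5]
  set L : ℝ := Γp + Γm with hLdef
  have hinvlog : Tendsto (fun t : ℝ => (Real.log t)⁻¹) atTop (nhds 0) :=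
    tendsto_inv_atTop_zero.comp Real.tendsto_log_atTop
  have hTlog : Tendsto (fun T : ℝ => T * Real.log T) atTop atTop :=
    Tendsto.atTop_mul_atTop₀ tendsto_id Real.tendsto_log_atTop
  have hinvTlog : Tendsto (fun T : ℝ => (T * Real.log T)⁻¹) atTop (nhds 0) :=
    tendsto_inv_atTop_zero.comp hTlog
  -- Step 1 : G t / log t → L
  have hm' : Tendsto (fun s : ℝ => s * K (-s)) atTop (nhds Γm) := by
    have h := hm.comp tendsto_neg_atTop_atBot
    refine h.congr' ?_
    filter_upwards [eventually_ge_atTop (0:ℝ)] with s hs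
    simp [Function.comp, abs_of_nonneg hs]
  have hfg1 : Tendsto (fun s : ℝ => f₁ s / s⁻¹) atTop (nhds L) := by
    refine (hp.add hm').congr' ?_
    filter_upwards [eventually_gt_atTop (0:ℝ)] with s hs
    simp only [hf₁def, div_inv_eq_mul]
    ring
  have hlogeq : ∀ᶠ T : ℝ in atTop, Real.log T = ∫ s in (1:ℝ)..T, s⁻¹ := by
    filter_upwards [eventually_gt_atTop (0:ℝ)] with T hT
    rw [integral_inv_of_pos one_pos hT]
    simp
  have hGt1 : Tendsto (fun T : ℝ => ∫ s in (1:ℝ)..T, s⁻¹) atTop atTop :=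
    Real.tendsto_log_atTop.congr' hlogeq
  have hgi1 : ∀ b : ℝ, (1:ℝ) ≤ b → IntervalIntegrable (fun s : ℝ => s⁻¹) volume 1 b := by
    intro b hb
    apply intervalIntegrable_inv
    · intro x hx
      rw [Set.uIcc_of_le hb] at hx
      exact ne_of_gt (lt_of_lt_of_le one_pos hx.1)
    · exact continuousOn_id
  have S1' : Tendsto (fun t => (∫ s in (1:ℝ)..t, f₁ s) / (∫ s in (1:ℝ)..t, s⁻¹))
      atTop (nhds L) :=
    coulomb_ratio_aux f₁ (fun s => s⁻¹) 1 L
      (fun b _ => hf₁int 1 b) hgi1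
      ((eventually_gt_atTop (0:ℝ)).mono fun s hs => inv_pos.mpr hs)
      hGt1 hfg1
  set C₁ : ℝ := ∫ s in (0:ℝ)..1, f₁ s with hC₁def
  have S1 : Tendsto (fun t => G t / Real.log t) atTop (nhds L) := by
    have base : Tendsto (fun t => C₁ * (Real.log t)⁻¹
        + (∫ s in (1:ℝ)..t, f₁ s) / (∫ s in (1:ℝ)..t, s⁻¹)) atTop (nhds L) := by
      simpa using (tendsto_const_nhds.mul hinvlog).add S1'
    refine base.congr' ?_
    filter_upwards [hlogeq] with t hlt
    rw [← hlt, hGeq t,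
      ← intervalIntegral.integral_add_adjacent_intervals (hf₁int 0 1) (hf₁int 1 t)]
    rw [add_div, div_eq_mul_inv]
    ring_nf
    rw [← hC₁def]; ring
  -- Step 2 : (∫_2^T G) / (∫_2^T log) → L
  have hloge : ∀ᶠ T : ℝ in atTop,
      (∫ s in (2:ℝ)..T, Real.log s) = T * Real.log T - 2 * Real.log 2 - T + 2 := by
    filter_upwards [eventually_gt_atTop (0:ℝ)] with T hT
    rw [integral_log]
  have hGt2 : Tendsto (fun T : ℝ => ∫ s in (2:ℝ)..T, Real.log s) atTop atTop := by
    have base : Tendsto (fun T : ℝ => T * Real.log T - 2 * Real.log 2 - T + 2) atTop atTop := by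
      have h1 : Tendsto (fun T : ℝ => T * (Real.log T - 1)) atTop atTop :=
        Tendsto.atTop_mul_atTop₀ tendsto_id
          (tendsto_atTop_add_const_right _ (-1) Real.tendsto_log_atTop |>.congr (by
            intro x; ring))
      have := tendsto_atTop_add_const_right _ (2 - 2 * Real.log 2) h1
      refine this.congr fun T => by ring
    exact base.congr' (by filter_upwards [hloge] with T h; rw [h])
  have hgi2 : ∀ b : ℝ, (2:ℝ) ≤ b → IntervalIntegrable Real.log volume 2 b := by
    intro b hb
    apply ContinuousOn.intervalIntegrable
    refine Real.continuousOn_log.mono ?_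
    intro x hx
    rw [Set.uIcc_of_le hb] at hx
    exact ne_of_gt (lt_of_lt_of_le two_pos hx.1)
  have S2 : Tendsto (fun T => (∫ t in (2:ℝ)..T, G t) / (∫ s in (2:ℝ)..T, Real.log s))
      atTop (nhds L) :=
    coulomb_ratio_aux G Real.log 2 L
      (fun b _ => hGc.intervalIntegrable 2 b) hgi2
      ((eventually_gt_atTop (1:ℝ)).mono fun s hs => Real.log_pos hs)
      hGt2 S1
  -- ratio2 : (∫_2^T log) / (T log T) → 1
  have ratio2 : Tendsto (fun T : ℝ => (∫ s in (2:ℝ)..T, Real.log s) / (T * Real.log T))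
      atTop (nhds 1) := by
    have base : Tendsto (fun T : ℝ => 1 - (Real.log T)⁻¹
        - (2 * Real.log 2 - 2) * (T * Real.log T)⁻¹) atTop (nhds 1) := by
      have h1 : Tendsto (fun _ : ℝ => (1:ℝ)) atTop (nhds 1) := tendsto_const_nhds
      have h2 : Tendsto (fun _ : ℝ => (2 * Real.log 2 - 2 : ℝ)) atTop
          (nhds (2 * Real.log 2 - 2)) := tendsto_const_nhds
      have h := (h1.sub hinvlog).sub (h2.mul hinvTlog)
      simpa using h
    refine base.congr' ?_
    filter_upwards [hloge, eventually_gt_atTop (1:ℝ)] with T hT hT1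
    have hT0 : (0:ℝ) < T := lt_trans one_pos hT1
    have hlogT : 0 < Real.log T := Real.log_pos hT1
    rw [hT]
    field_simp
    ring
  -- Final assembly
  set C₂ : ℝ := ∫ t in (0:ℝ)..2, G t with hC₂def
  have final0 : Tendsto (fun T : ℝ =>
      ((∫ t in (2:ℝ)..T, G t) / (∫ s in (2:ℝ)..T, Real.log s))
        * ((∫ s in (2:ℝ)..T, Real.log s) / (T * Real.log T))
      + C₂ * (T * Real.log T)⁻¹) atTop (nhds L) := by
    simpa using (S2.mul ratio2).add (tendsto_const_nhds.mul hinvTlog)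
  refine final0.congr' ?_
  filter_upwards [hGt2.eventually_ge_atTop 1, eventually_gt_atTop (1:ℝ)] with T hψ1 hT1
  have hT0 : (0:ℝ) < T := lt_trans one_pos hT1
  have hlogT : 0 < Real.log T := Real.log_pos hT1
  have hψne : (∫ s in (2:ℝ)..T, Real.log s) ≠ 0 := by linarith
  have hTlne : T * Real.log T ≠ 0 := by positivity
  have hcancel : (∫ t in (2:ℝ)..T, G t) / (∫ s in (2:ℝ)..T, Real.log s)
      * ((∫ s in (2:ℝ)..T, Real.log s) / (T * Real.log T))
      = (∫ t in (2:ℝ)..T, G t) / (T * Real.log T) := by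
    rw [div_mul_div_comm, mul_comm (∫ t in (2:ℝ)..T, G t) (∫ s in (2:ℝ)..T, Real.log s),
      mul_div_mul_left _ _ hψne]
  rw [key T, ← intervalIntegral.integral_add_adjacent_intervals
    (hGc.intervalIntegrable 0 2) (hGc.intervalIntegrable 2 T), hcancel, ← hC₂def,
    div_eq_mul_inv]
  ring
end

section
/- Let Φ : ℝ³ → ℝ be continuously differentiable and suppose there exist constants C > 0 and a > 2 such that |∇Φ(x)| ≤ C (1 + |x|)^{-(1+a)} for all x ∈ ℝ³. Let g be a finite Borel measure on ℝ³ and let V ∈ ℝ³ with ∫_{ℝ³} dg(v)/|v − V| < ∞. Then ∫_ℝ ∫_{ℝ³} ∫_{ℝ³} |∇Φ(ξ + τ·(V − v))| · |∇Φ(ξ)| dξ dg(v) dτ ≤ (2C/a) (∫_{ℝ³} |∇Φ(ξ)| dξ) ∫_{ℝ³} dg(v)/|V − v| < ∞; in particular, the matrix-valued kernel K(V;τ) = ∫_{ℝ³} ∫_{ℝ³} ∇Φ(ξ + (V − v)τ) ⊗ ∇Φ(ξ) dg(v) dξ is defined for every τ and τ ↦ K(V;τ) is Bochner integrable on ℝ.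 -/
open MeasureTheory Real Set

section Aux

lemma aux_base_integrable0 {a : ℝ} (ha : 2 < a) :
    IntegrableOn (fun u : ℝ => (1 + u) ^ (-(1 + a))) (Ioi (0:ℝ)) ∧
    ∫ u in Ioi (0:ℝ), (1 + u) ^ (-(1 + a)) = 1 / a := by
  have hderiv : ∀ x ∈ Ici (0:ℝ),
      HasDerivAt (fun u : ℝ => -(1 + u) ^ (-a) / a) ((1 + x) ^ (-(1 + a))) x := by
    intro x hx
    have hx1 : (0:ℝ) < 1 + x := by simp at hx; linarith
    have h1 : HasDerivAt (fun u : ℝ => 1 + u) 1 x := (hasDerivAt_id x).const_add 1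
    have h2 : HasDerivAt (fun u : ℝ => (1 + u) ^ (-a)) (-a * (1 + x) ^ (-a - 1) * 1) x :=
      (Real.hasDerivAt_rpow_const (Or.inl hx1.ne')).comp x h1
    have := (h2.neg).div_const a
    refine this.congr_deriv (Eq.symm ?_)
    have hane : a ≠ 0 := by linarith
    rw [mul_one]
    field_simp
    rw [show -a - 1 = -(1+a) by ring]
  have htend : Filter.Tendsto (fun u : ℝ => -(1 + u) ^ (-a) / a) Filter.atTop (nhds 0) := by
    have h0 : Filter.Tendsto (fun u : ℝ => (1 + u)) Filter.atTop Filter.atTop :=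
      Filter.tendsto_atTop_add_const_left _ 1 Filter.tendsto_id
    have h1 : Filter.Tendsto (fun u : ℝ => (1 + u) ^ (-a)) Filter.atTop (nhds 0) :=
      (tendsto_rpow_neg_atTop (by linarith)).comp h0
    have := (h1.neg).div_const a
    simpa using this
  have hint : IntegrableOn (fun u : ℝ => (1 + u) ^ (-(1 + a))) (Ioi (0:ℝ)) :=
    integrableOn_Ioi_deriv_of_nonneg' hderiv
      (fun x hx => rpow_nonneg (by simp at hx ⊢; linarith) _) htend
  refine ⟨hint, ?_⟩
  rw [integral_Ioi_of_hasDerivAt_of_tendsto' hderiv hint htend]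
  norm_num [Real.one_rpow]
  ring

lemma aux_f_integrable {a : ℝ} (ha : 2 < a) :
    Integrable (fun u : ℝ => (1 + |u|) ^ (-(1 + a))) := by
  have := integrable_one_add_norm (E := ℝ) (μ := volume) (r := 1 + a)
    (by simp [Module.finrank_self]; linarith)
  simpa [Real.norm_eq_abs] using this

lemma aux_line_integrable {a b c : ℝ} (ha : 2 < a) (hb : 0 < b) :
    Integrable (fun τ : ℝ => (1 + b * |τ - c|) ^ (-(1 + a))) := by
  have h1 : Integrable (fun τ : ℝ => (1 + |b * τ|) ^ (-(1 + a))) :=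
    (aux_f_integrable ha).comp_mul_left' hb.ne'
  have h2 : Integrable (fun τ : ℝ => (1 + |b * (τ + -c)|) ^ (-(1 + a))) :=
    h1.comp_add_right (-c)
  refine h2.congr (Filter.Eventually.of_forall fun τ => ?_)
  simp only [show τ + -c = τ - c by ring, abs_mul, abs_of_pos hb]

lemma aux_line_integral {a b c : ℝ} (ha : 2 < a) (hb : 0 < b) :
    ∫ τ : ℝ, (1 + b * |τ - c|) ^ (-(1 + a)) = 2 / (a * b) := by
  have e1 : ∀ τ : ℝ, (1 + b * |τ - c|) ^ (-(1 + a)) = (1 + |b * (τ - c)|) ^ (-(1 + a)) := by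
    intro τ; rw [abs_mul, abs_of_pos hb]
  simp_rw [e1]
  rw [show (fun τ : ℝ => (1 + |b * (τ - c)|) ^ (-(1 + a))) =
    (fun τ : ℝ => (fun t => (1 + |b * t|) ^ (-(1 + a))) (τ - c)) from rfl]
  rw [integral_sub_right_eq_self (fun t : ℝ => (1 + |b * t|) ^ (-(1 + a))) c]
  rw [MeasureTheory.Measure.integral_comp_mul_left (fun t : ℝ => (1 + |t|) ^ (-(1 + a))) b]
  rw [integral_comp_abs (f := fun t : ℝ => (1 + t) ^ (-(1 + a)))]
  rw [(aux_base_integrable0 ha).2, abs_of_pos (inv_pos.mpr hb), smul_eq_mul]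
  field_simp

noncomputable abbrev E3 := EuclideanSpace ℝ (Fin 3)

lemma aux_geom (ξ w : E3) (hw : w ≠ 0) (τ : ℝ) :
    ‖w‖ * |τ - (-(inner ℝ ξ w : ℝ) / ‖w‖ ^ 2)| ≤ ‖ξ + τ • w‖ := by
  set t0 : ℝ := -(inner ℝ ξ w : ℝ) / ‖w‖ ^ 2 with ht0
  have hwn : (0:ℝ) < ‖w‖ := norm_pos_iff.mpr hw
  have h2 : (inner ℝ (ξ + τ • w) w : ℝ) = ‖w‖ ^ 2 * (τ - t0) := by
    rw [inner_add_left, real_inner_smul_left, real_inner_self_eq_norm_sq, ht0]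
    field_simp
    ring
  have h3 : ‖w‖ ^ 2 * |τ - t0| ≤ ‖ξ + τ • w‖ * ‖w‖ := by
    calc ‖w‖ ^ 2 * |τ - t0| = |(inner ℝ (ξ + τ • w) w : ℝ)| := by
          rw [h2, abs_mul, abs_of_nonneg (by positivity : (0:ℝ) ≤ ‖w‖ ^ 2)]
      _ ≤ ‖ξ + τ • w‖ * ‖w‖ := abs_real_inner_le_norm _ _
  nlinarith [abs_nonneg (τ - t0)]

lemma aux_tau_lintegral (Φ : E3 → ℝ) (C a : ℝ) (hC : 0 < C) (ha : 2 < a)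
    (hdecay : ∀ x, ‖gradient Φ x‖ ≤ C * (1 + ‖x‖) ^ (-(1 + a)))
    (ξ w : E3) (hw : w ≠ 0) :
    ∫⁻ τ : ℝ, ENNReal.ofReal ‖gradient Φ (ξ + τ • w)‖
      ≤ ENNReal.ofReal (2 * C / a) * (ENNReal.ofReal ‖w‖)⁻¹ := by
  set t0 : ℝ := -(inner ℝ ξ w : ℝ) / ‖w‖ ^ 2 with ht0
  have hwn : (0:ℝ) < ‖w‖ := norm_pos_iff.mpr hw
  have hbound : ∀ τ : ℝ, ‖gradient Φ (ξ + τ • w)‖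
      ≤ C * (1 + ‖w‖ * |τ - t0|) ^ (-(1 + a)) := by
    intro τ
    refine (hdecay _).trans ?_
    exact mul_le_mul_of_nonneg_left
      (Real.rpow_le_rpow_of_nonpos (by positivity) (by linarith [aux_geom ξ w hw τ])
        (by linarith)) hC.le
  calc ∫⁻ τ : ℝ, ENNReal.ofReal ‖gradient Φ (ξ + τ • w)‖
      ≤ ∫⁻ τ : ℝ, ENNReal.ofReal (C * (1 + ‖w‖ * |τ - t0|) ^ (-(1 + a))) :=
        lintegral_mono fun τ => ENNReal.ofReal_le_ofReal (hbound τ)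
    _ = ENNReal.ofReal (∫ τ : ℝ, C * (1 + ‖w‖ * |τ - t0|) ^ (-(1 + a))) := by
        rw [MeasureTheory.ofReal_integral_eq_lintegral_ofReal
          ((aux_line_integrable ha hwn).const_mul C)
          (Filter.Eventually.of_forall fun τ => by positivity)]
    _ = ENNReal.ofReal (2 * C / a) * (ENNReal.ofReal ‖w‖)⁻¹ := by
        rw [MeasureTheory.integral_const_mul, aux_line_integral ha hwn]
        rw [show C * (2 / (a * ‖w‖)) = (2 * C / a) / ‖w‖ by field_simp]
        rw [ENNReal.ofReal_div_of_pos hwn, div_eq_mul_inv]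

lemma aux_coord (x : E3) (i : Fin 3) : |x i| ≤ ‖x‖ := by
  calc |x i| = √(‖x i‖ ^ 2) := by
        rw [Real.sqrt_sq_eq_abs, Real.norm_eq_abs, abs_abs]
    _ ≤ √(∑ j, ‖x j‖ ^ 2) := Real.sqrt_le_sqrt
        (Finset.single_le_sum (f := fun j => ‖x j‖ ^ 2) (fun j _ => sq_nonneg _)
          (Finset.mem_univ i))
    _ = ‖x‖ := (EuclideanSpace.norm_eq x).symm

lemma aux_matrix_norm (A B : E3) :
    ‖(fun i j => A i * B j : Fin 3 → Fin 3 → ℝ)‖ ≤ ‖A‖ * ‖B‖ := by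
  rw [pi_norm_le_iff_of_nonneg (by positivity)]
  intro i
  rw [pi_norm_le_iff_of_nonneg (by positivity)]
  intro j
  rw [Real.norm_eq_abs, abs_mul]
  exact mul_le_mul (aux_coord A i) (aux_coord B j) (abs_nonneg _) (norm_nonneg _)

end Aux

/-- Integrability in time of the force–force correlation kernel: for a `C¹` potential
with `|∇Φ(x)| ≤ C(1+|x|)^{-(1+a)}`, `a > 2`, and a finite Borel velocity measure `g`
with `∫ dg(v)/|v − V| < ∞`, one has
`∫_ℝ ∫∫ |∇Φ(ξ + τ(V−v))| |∇Φ(ξ)| dξ dg(v) dτ ≤ (2C/a)(∫|∇Φ|) ∫ dg(v)/|V−v| < ∞`;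
in particular the matrix kernel `K(V;τ) = ∫∫ ∇Φ(ξ+(V−v)τ) ⊗ ∇Φ(ξ) dg(v) dξ` is
defined for every `τ` and `τ ↦ K(V;τ)` is Bochner integrable on `ℝ`. -/
theorem correlation_kernel_time_integrable
    (Φ : EuclideanSpace ℝ (Fin 3) → ℝ) (hΦ : ContDiff ℝ 1 Φ)
    (C a : ℝ) (hC : 0 < C) (ha : 2 < a)
    (hdecay : ∀ x, ‖gradient Φ x‖ ≤ C * (1 + ‖x‖) ^ (-(1 + a)))
    (g : Measure (EuclideanSpace ℝ (Fin 3))) [IsFiniteMeasure g]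
    (V : EuclideanSpace ℝ (Fin 3))
    (hV : ∫⁻ v, (ENNReal.ofReal ‖v - V‖)⁻¹ ∂g < ⊤) :
    (∫⁻ τ : ℝ, ∫⁻ v, ∫⁻ ξ,
        ENNReal.ofReal (‖gradient Φ (ξ + τ • (V - v))‖ * ‖gradient Φ ξ‖) ∂volume ∂g)
      ≤ ENNReal.ofReal ((2 * C / a) * ∫ ξ, ‖gradient Φ ξ‖)
          * ∫⁻ v, (ENNReal.ofReal ‖V - v‖)⁻¹ ∂g ∧
    (ENNReal.ofReal ((2 * C / a) * ∫ ξ, ‖gradient Φ ξ‖)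
        * ∫⁻ v, (ENNReal.ofReal ‖V - v‖)⁻¹ ∂g) < ⊤ ∧
    (∀ τ : ℝ, Integrable
      (fun p : EuclideanSpace ℝ (Fin 3) × EuclideanSpace ℝ (Fin 3) =>
        fun i j : Fin 3 => gradient Φ (p.2 + τ • (V - p.1)) i * gradient Φ p.2 j)
      (g.prod volume)) ∧
    Integrable (fun τ : ℝ =>
      ∫ p : EuclideanSpace ℝ (Fin 3) × EuclideanSpace ℝ (Fin 3),
        (fun i j : Fin 3 => gradient Φ (p.2 + τ • (V - p.1)) i * gradient Φ p.2 j)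
        ∂(g.prod volume)) := by
  have hgc : Continuous (gradient Φ) := by
    have h1 : Continuous (fderiv ℝ Φ) := hΦ.continuous_fderiv one_ne_zero
    exact (LinearIsometryEquiv.continuous _).comp h1
  -- integrability of ‖∇Φ‖
  have hgm : Integrable (fun ξ : E3 => ‖gradient Φ ξ‖) := by
    refine Integrable.mono' ((integrable_one_add_norm (E := E3) (μ := volume) (r := 1 + a)
      (by simp [finrank_euclideanSpace]; linarith)).const_mul C)
      hgc.norm.aestronglyMeasurable (Filter.Eventually.of_forall fun x => ?_)
    rw [norm_norm]
    exact hdecay x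
  set N : ℝ := ∫ ξ, ‖gradient Φ ξ‖ with hN
  have hN0 : 0 ≤ N := integral_nonneg fun _ => norm_nonneg _
  have hlinN : ∫⁻ ξ : E3, ENNReal.ofReal ‖gradient Φ ξ‖ = ENNReal.ofReal N :=
    (MeasureTheory.ofReal_integral_eq_lintegral_ofReal hgm
      (Filter.Eventually.of_forall fun _ => norm_nonneg _)).symm
  set K : ℝ := 2 * C / a with hKdef
  have hK0 : 0 ≤ K := by positivity
  -- measurability of the big integrand
  have mG : Measurable fun q : (ℝ × E3) × E3 =>
      ENNReal.ofReal (‖gradient Φ (q.2 + q.1.1 • (V - q.1.2))‖ * ‖gradient Φ q.2‖) := by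
    apply ENNReal.measurable_ofReal.comp
    apply Measurable.mul
    · exact ((hgc.comp (continuous_snd.add ((continuous_fst.fst).smul
        (continuous_const.sub continuous_fst.snd)))).norm).measurable
    · exact ((hgc.comp continuous_snd).norm).measurable
  -- inner bound for fixed velocity
  have hInner : ∀ v : E3, V - v ≠ 0 →
      (∫⁻ τ : ℝ, ∫⁻ ξ,
        ENNReal.ofReal (‖gradient Φ (ξ + τ • (V - v))‖ * ‖gradient Φ ξ‖) ∂volume)
      ≤ ENNReal.ofReal (K * N) * (ENNReal.ofReal ‖V - v‖)⁻¹ := by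
    intro v hw
    set w : E3 := V - v with hwdef
    have hwn : (0:ℝ) < ‖w‖ := norm_pos_iff.mpr hw
    have m1 : Measurable fun p : ℝ × E3 => ((p.1, v), p.2) :=
      (measurable_fst.prodMk measurable_const).prodMk measurable_snd
    have hswap : (∫⁻ τ : ℝ, ∫⁻ ξ,
          ENNReal.ofReal (‖gradient Φ (ξ + τ • w)‖ * ‖gradient Φ ξ‖) ∂volume)
        = ∫⁻ ξ : E3, ∫⁻ τ : ℝ,
          ENNReal.ofReal (‖gradient Φ (ξ + τ • w)‖ * ‖gradient Φ ξ‖) ∂volume :=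
      lintegral_lintegral_swap (mG.comp m1).aemeasurable
    rw [hswap]
    calc (∫⁻ ξ : E3, ∫⁻ τ : ℝ,
          ENNReal.ofReal (‖gradient Φ (ξ + τ • w)‖ * ‖gradient Φ ξ‖) ∂volume)
        = ∫⁻ ξ : E3, (∫⁻ τ : ℝ, ENNReal.ofReal ‖gradient Φ (ξ + τ • w)‖)
            * ENNReal.ofReal ‖gradient Φ ξ‖ := by
          refine lintegral_congr fun ξ => ?_
          rw [← lintegral_mul_const' _ _ ENNReal.ofReal_ne_top]
          exact lintegral_congr fun τ => ENNReal.ofReal_mul (norm_nonneg _)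
      _ ≤ ∫⁻ ξ : E3, (ENNReal.ofReal K * (ENNReal.ofReal ‖w‖)⁻¹)
            * ENNReal.ofReal ‖gradient Φ ξ‖ :=
          lintegral_mono fun ξ => mul_le_mul_left
            (aux_tau_lintegral Φ C a hC ha hdecay ξ w hw) _
      _ = (ENNReal.ofReal K * (ENNReal.ofReal ‖w‖)⁻¹) * ∫⁻ ξ : E3,
            ENNReal.ofReal ‖gradient Φ ξ‖ :=
          lintegral_const_mul' _ _ (ENNReal.mul_ne_top ENNReal.ofReal_ne_top
            (ENNReal.inv_ne_top.mpr (ENNReal.ofReal_pos.mpr hwn).ne'))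
      _ = ENNReal.ofReal (K * N) * (ENNReal.ofReal ‖w‖)⁻¹ := by
          rw [hlinN, ENNReal.ofReal_mul hK0]; ring
  -- a.e. nondegeneracy
  have hae : ∀ᵐ v ∂g, V - v ≠ 0 := by
    have hm : Measurable fun v : E3 => (ENNReal.ofReal ‖v - V‖)⁻¹ :=
      (((continuous_id.sub continuous_const).norm).measurable.ennreal_ofReal).inv
    filter_upwards [ae_lt_top hm hV.ne] with v hv
    intro h
    have hvV : v = V := by
      have := sub_eq_zero.mp h
      exact this.symm
    rw [hvV] at hv
    simp at hv
  -- Part 1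
  have part1 : (∫⁻ τ : ℝ, ∫⁻ v, ∫⁻ ξ,
        ENNReal.ofReal (‖gradient Φ (ξ + τ • (V - v))‖ * ‖gradient Φ ξ‖) ∂volume ∂g)
      ≤ ENNReal.ofReal (K * N) * ∫⁻ v, (ENNReal.ofReal ‖V - v‖)⁻¹ ∂g := by
    have hswap : (∫⁻ τ : ℝ, ∫⁻ v, ∫⁻ ξ,
          ENNReal.ofReal (‖gradient Φ (ξ + τ • (V - v))‖ * ‖gradient Φ ξ‖) ∂volume ∂g)
        = ∫⁻ v, (∫⁻ τ : ℝ, ∫⁻ ξ,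
          ENNReal.ofReal (‖gradient Φ (ξ + τ • (V - v))‖ * ‖gradient Φ ξ‖) ∂volume) ∂g :=
      lintegral_lintegral_swap (mG.lintegral_prod_right').aemeasurable
    rw [hswap]
    calc (∫⁻ v, (∫⁻ τ : ℝ, ∫⁻ ξ,
          ENNReal.ofReal (‖gradient Φ (ξ + τ • (V - v))‖ * ‖gradient Φ ξ‖) ∂volume) ∂g)
        ≤ ∫⁻ v, ENNReal.ofReal (K * N) * (ENNReal.ofReal ‖V - v‖)⁻¹ ∂g :=
          lintegral_mono_ae (hae.mono fun v hv => hInner v hv)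
      _ = ENNReal.ofReal (K * N) * ∫⁻ v, (ENNReal.ofReal ‖V - v‖)⁻¹ ∂g :=
          lintegral_const_mul' _ _ ENNReal.ofReal_ne_top
  -- Part 2
  have heq : (∫⁻ v, (ENNReal.ofReal ‖V - v‖)⁻¹ ∂g) = ∫⁻ v, (ENNReal.ofReal ‖v - V‖)⁻¹ ∂g :=
    lintegral_congr fun v => by rw [norm_sub_rev]
  have part2 : ENNReal.ofReal (K * N) * (∫⁻ v, (ENNReal.ofReal ‖V - v‖)⁻¹ ∂g) < ⊤ := by
    rw [heq]
    exact ENNReal.mul_lt_top ENNReal.ofReal_lt_top hV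
  -- pointwise norm bound for the matrix integrand
  have hmatbd : ∀ (τ : ℝ) (p : E3 × E3),
      ‖(fun i j : Fin 3 => gradient Φ (p.2 + τ • (V - p.1)) i * gradient Φ p.2 j)‖
        ≤ ‖gradient Φ (p.2 + τ • (V - p.1))‖ * ‖gradient Φ p.2‖ := fun τ p =>
    aux_matrix_norm _ _
  have hgradC : ∀ x : E3, ‖gradient Φ x‖ ≤ C := by
    intro x
    refine (hdecay x).trans ?_
    have h1 : (1 + ‖x‖) ^ (-(1 + a)) ≤ 1 :=
      Real.rpow_le_one_of_one_le_of_nonpos (by linarith [norm_nonneg x]) (by linarith)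
    nlinarith
  -- continuity of the matrix integrand, jointly in (τ, p)
  have hcont2 : Continuous fun q : ℝ × (E3 × E3) =>
      (fun i j : Fin 3 => gradient Φ (q.2.2 + q.1 • (V - q.2.1)) i * gradient Φ q.2.2 j) := by
    apply continuous_pi; intro i; apply continuous_pi; intro j
    have hc1 : Continuous fun q : ℝ × (E3 × E3) => gradient Φ (q.2.2 + q.1 • (V - q.2.1)) :=
      hgc.comp ((continuous_snd.snd).add (continuous_fst.smul
        (continuous_const.sub continuous_snd.fst)))
    have hc2 : Continuous fun q : ℝ × (E3 × E3) => gradient Φ q.2.2 :=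
      hgc.comp continuous_snd.snd
    exact ((EuclideanSpace.proj i).continuous.comp hc1).mul ((EuclideanSpace.proj j).continuous.comp hc2)
  -- Part 3
  have part3 : ∀ τ : ℝ, Integrable
      (fun p : E3 × E3 =>
        fun i j : Fin 3 => gradient Φ (p.2 + τ • (V - p.1)) i * gradient Φ p.2 j)
      (g.prod volume) := by
    intro τ
    have hmaj : Integrable (fun p : E3 × E3 => C * ‖gradient Φ p.2‖) (g.prod volume) :=
      (integrable_const C).mul_prod hgm
    refine hmaj.mono' ?_ (Filter.Eventually.of_forall fun p => ?_)
    · have : Continuous fun p : E3 × E3 =>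
          (fun i j : Fin 3 => gradient Φ (p.2 + τ • (V - p.1)) i * gradient Φ p.2 j) :=
        hcont2.comp (Continuous.prodMk continuous_const continuous_id)
      exact this.aestronglyMeasurable
    · refine (hmatbd τ p).trans ?_
      exact mul_le_mul_of_nonneg_right (hgradC _) (norm_nonneg _)
  refine ⟨part1, part2, part3, ?_⟩
  -- Part 4
  constructor
  · have hsm : StronglyMeasurable fun q : ℝ × (E3 × E3) =>
        (fun i j : Fin 3 => gradient Φ (q.2.2 + q.1 • (V - q.2.1)) i * gradient Φ q.2.2 j) :=
      hcont2.stronglyMeasurable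
    exact hsm.integral_prod_right'.aestronglyMeasurable
  · rw [hasFiniteIntegral_iff_norm]
    calc (∫⁻ τ : ℝ, ENNReal.ofReal ‖∫ p : E3 × E3,
            (fun i j : Fin 3 => gradient Φ (p.2 + τ • (V - p.1)) i * gradient Φ p.2 j)
            ∂(g.prod volume)‖)
        ≤ ∫⁻ τ : ℝ, ∫⁻ p : E3 × E3, ↑‖(fun i j : Fin 3 =>
            gradient Φ (p.2 + τ • (V - p.1)) i * gradient Φ p.2 j)‖₊ ∂(g.prod volume) := by
          refine lintegral_mono fun τ => ?_
          rw [ofReal_norm]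
          exact enorm_integral_le_lintegral_enorm _
      _ ≤ ∫⁻ τ : ℝ, ∫⁻ v, ∫⁻ ξ,
            ENNReal.ofReal (‖gradient Φ (ξ + τ • (V - v))‖ * ‖gradient Φ ξ‖) ∂volume ∂g := by
          refine lintegral_mono fun τ => ?_
          have hm : AEMeasurable (fun p : E3 × E3 => (↑‖(fun i j : Fin 3 =>
              gradient Φ (p.2 + τ • (V - p.1)) i * gradient Φ p.2 j)‖₊ : ENNReal))
              (g.prod volume) := by
            have : Continuous fun p : E3 × E3 =>
                (fun i j : Fin 3 => gradient Φ (p.2 + τ • (V - p.1)) i * gradient Φ p.2 j) :=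
              hcont2.comp (Continuous.prodMk continuous_const continuous_id)
            exact (ENNReal.continuous_coe.comp this.nnnorm).measurable.aemeasurable
          rw [lintegral_prod _ hm]
          refine lintegral_mono fun v => lintegral_mono fun ξ => ?_
          refine (ofReal_norm _).symm.trans_le ?_
          exact ENNReal.ofReal_le_ofReal (hmatbd τ (v, ξ))
      _ ≤ ENNReal.ofReal (K * N) * ∫⁻ v, (ENNReal.ofReal ‖V - v‖)⁻¹ ∂g := part1
      _ < ⊤ := part2
end
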